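/- arXiv:2102.08272 — 5 statements merged into one kernel-verified Lean document; each statement's English description precedes it below -/
import Mathlib

section
/- Let 0 < δ₀ ≤ 10^{−10} and γ ∈ 𝔊₃(δ₀). Let ξ = (ξ₁,ξ₂,ξ₃) ∈ ℝ³, ξ ≠ 0, satisfy ξ₃ ≥ (9/10)|ξ| and |ξ_j| ≤ 8 δ₀ |ξ| for j = 1, 2. Then the equation ⟨γ''(s), ξ⟩ = 0 has exactly one solution s* in [−1,1]; moreover |s*| ≤ 16 δ₀, and s* is the unique global minimizer on [−1,1] of the function s ↦ ⟨γ'(s), ξ⟩, that is, ⟨γ'(s), ξ⟩ > ⟨γ'(s*), ξ⟩ for every s ∈ [−1,1] with s ≠ s*. -/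
open MeasureTheory Real Set
open scoped InnerProductSpace ENNReal NNReal

noncomputable section

/-- The moment curve `γ∘(s) = (s, s²/2, s³/6)` in `ℝ³`. -/
def momentCurve (s : ℝ) : EuclideanSpace ℝ (Fin 3) :=
  (EuclideanSpace.equiv (Fin 3) ℝ).symm ![s, s ^ 2 / 2, s ^ 3 / 6]

namespace St5Aux

local notation "E" => fun (j : Fin 3) => EuclideanSpace.single j (1 : ℝ)

lemma mc_eq : momentCurve = fun s : ℝ =>
    s • E 0 + (s ^ 2 / 2) • E 1 + (s ^ 3 / 6) • E 2 := by
  funext s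
  ext i
  fin_cases i <;>
    simp [momentCurve, EuclideanSpace.single_apply, PiLp.add_apply, PiLp.smul_apply]

lemma hd1 (s : ℝ) :
    HasDerivAt momentCurve (E 0 + s • E 1 + (s ^ 2 / 2) • E 2) s := by
  rw [mc_eq]
  have h1 : HasDerivAt (fun s : ℝ => s • E 0) ((1 : ℝ) • E 0) s :=
    (hasDerivAt_id s).smul_const _
  have h2' : HasDerivAt (fun s : ℝ => s ^ 2 / 2) s s := by
    have := (hasDerivAt_pow 2 s).div_const 2
    norm_num at this; simpa using this
  have h3' : HasDerivAt (fun s : ℝ => s ^ 3 / 6) (s ^ 2 / 2) s := by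
    have := (hasDerivAt_pow 3 s).div_const 6
    norm_num at this
    rw [show s ^ 2 / 2 = 3 * s ^ 2 / 6 by ring]; exact this
  have := (h1.add (h2'.smul_const (E 1))).add (h3'.smul_const (E 2))
  simp only [one_smul] at this; exact this

lemma d1 : deriv momentCurve = fun s : ℝ => E 0 + s • E 1 + (s ^ 2 / 2) • E 2 :=
  funext fun s => (hd1 s).deriv

lemma hd2 (s : ℝ) : HasDerivAt (deriv momentCurve) (E 1 + s • E 2) s := by
  rw [d1]
  have h2' : HasDerivAt (fun s : ℝ => s ^ 2 / 2) s s := by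
    have := (hasDerivAt_pow 2 s).div_const 2
    norm_num at this; simpa using this
  have := ((hasDerivAt_const s (E 0)).add ((hasDerivAt_id s).smul_const (E 1))).add
    (h2'.smul_const (E 2))
  simp only [zero_add, one_smul] at this; exact this

lemma d2 : iteratedDeriv 2 momentCurve = fun s : ℝ => E 1 + s • E 2 := by
  rw [iteratedDeriv_succ, iteratedDeriv_one]
  exact funext fun s => (hd2 s).deriv

lemma d3 : iteratedDeriv 3 momentCurve = fun _ : ℝ => E 2 := by
  rw [iteratedDeriv_succ, d2]
  funext s
  have := (hasDerivAt_const s (E 1)).add ((hasDerivAt_id s).smul_const (E 2))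
  simpa using this.deriv

end St5Aux

open St5Aux in
set_option maxHeartbeats 1000000 in
theorem statement5
    (δ₀ : ℝ) (hδ₀pos : 0 < δ₀) (hδ₀small : δ₀ ≤ (10 : ℝ) ^ (-(10 : ℤ)))
    (γ : ℝ → EuclideanSpace ℝ (Fin 3)) (hγ : ContDiff ℝ (⊤ : ℕ∞) γ)
    (hγ0 : γ 0 = 0)
    (hγder : ∀ j : Fin 3, iteratedDeriv ((j : ℕ) + 1) γ 0 = EuclideanSpace.single j 1)
    (hγclose : ∀ j : ℕ, 1 ≤ j → j ≤ 4 → ∀ s ∈ Set.Icc (-1 : ℝ) 1,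
      ‖iteratedDeriv j γ s - iteratedDeriv j momentCurve s‖ ≤ δ₀)
    (ξ : EuclideanSpace ℝ (Fin 3)) (hξ : ξ ≠ 0)
    (hξ3 : (9 / 10) * ‖ξ‖ ≤ ξ 2)
    (hξ1 : |ξ 0| ≤ 8 * δ₀ * ‖ξ‖) (hξ2 : |ξ 1| ≤ 8 * δ₀ * ‖ξ‖) :
    ∃ s' ∈ Set.Icc (-1 : ℝ) 1,
      ⟪iteratedDeriv 2 γ s', ξ⟫_ℝ = 0 ∧
      |s'| ≤ 16 * δ₀ ∧
      (∀ s ∈ Set.Icc (-1 : ℝ) 1, ⟪iteratedDeriv 2 γ s, ξ⟫_ℝ = 0 → s = s') ∧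
      (∀ s ∈ Set.Icc (-1 : ℝ) 1, s ≠ s' →
        ⟪iteratedDeriv 1 γ s', ξ⟫_ℝ < ⟪iteratedDeriv 1 γ s, ξ⟫_ℝ) := by
  have hξnorm : (0 : ℝ) < ‖ξ‖ := norm_pos_iff.mpr hξ
  have hδsmall : δ₀ ≤ (1 : ℝ) / 10 ^ 10 := by
    have h : ((10 : ℝ) ^ (-(10 : ℤ))) = 1 / 10 ^ 10 := by norm_num
    rw [h] at hδ₀small
    exact hδ₀small
  -- smoothness of iterated derivatives of γ
  have hγn : ∀ n : ℕ, ContDiff ℝ (⊤ : ℕ∞) (iteratedDeriv n γ) := fun n => by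
    rw [iteratedDeriv_eq_iterate]
    exact ContDiff.iterate_deriv n hγ
  have hone : (1 : WithTop ℕ∞) ≤ ((⊤ : ℕ∞) : WithTop ℕ∞) := by
    exact_mod_cast le_top
  have hder : ∀ n : ℕ, ∀ s : ℝ,
      HasDerivAt (iteratedDeriv n γ) (iteratedDeriv (n + 1) γ s) s := fun n s => by
    rw [iteratedDeriv_succ]
    exact (((hγn n).differentiable (by simp)) s).hasDerivAt
  set f : ℝ → ℝ := fun s => ⟪iteratedDeriv 2 γ s, ξ⟫_ℝ with hf_def
  set g : ℝ → ℝ := fun s => ⟪iteratedDeriv 1 γ s, ξ⟫_ℝ with hg_def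
  have hf' : ∀ s : ℝ, HasDerivAt f (⟪iteratedDeriv 3 γ s, ξ⟫_ℝ) s := fun s => by
    have h := HasDerivAt.inner ℝ (hder 2 s) (hasDerivAt_const s ξ)
    rw [inner_zero_right, zero_add] at h
    exact h
  have hg' : ∀ s : ℝ, HasDerivAt g (f s) s := fun s => by
    have h := HasDerivAt.inner ℝ (hder 1 s) (hasDerivAt_const s ξ)
    rw [inner_zero_right, zero_add] at h
    exact h
  have hfc : Continuous f := ((hγn 2).continuous).inner continuous_const
  have hgc : Continuous g := ((hγn 1).continuous).inner continuous_const
  -- quantitative bounds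
  have hfb : ∀ s ∈ Set.Icc (-1 : ℝ) 1, |f s - (ξ 1 + s * ξ 2)| ≤ δ₀ * ‖ξ‖ := by
    intro s hs
    have heq : f s - (ξ 1 + s * ξ 2)
        = ⟪iteratedDeriv 2 γ s - iteratedDeriv 2 momentCurve s, ξ⟫_ℝ := by
      rw [d2]
      simp only [hf_def, inner_sub_left, inner_add_left, real_inner_smul_left,
        EuclideanSpace.inner_single_left, RCLike.star_def, conj_trivial, one_mul]
    rw [heq]
    calc |⟪iteratedDeriv 2 γ s - iteratedDeriv 2 momentCurve s, ξ⟫_ℝ|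
        ≤ ‖iteratedDeriv 2 γ s - iteratedDeriv 2 momentCurve s‖ * ‖ξ‖ :=
          abs_real_inner_le_norm _ _
      _ ≤ δ₀ * ‖ξ‖ := by
          exact mul_le_mul_of_nonneg_right
            (hγclose 2 (by norm_num) (by norm_num) s hs) (norm_nonneg _)
  have hf'b : ∀ s ∈ Set.Icc (-1 : ℝ) 1, |⟪iteratedDeriv 3 γ s, ξ⟫_ℝ - ξ 2| ≤ δ₀ * ‖ξ‖ := by
    intro s hs
    have heq : ⟪iteratedDeriv 3 γ s, ξ⟫_ℝ - ξ 2
        = ⟪iteratedDeriv 3 γ s - iteratedDeriv 3 momentCurve s, ξ⟫_ℝ := by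
      rw [d3]
      simp only [inner_sub_left, EuclideanSpace.inner_single_left, RCLike.star_def,
        conj_trivial, one_mul]
    rw [heq]
    calc |⟪iteratedDeriv 3 γ s - iteratedDeriv 3 momentCurve s, ξ⟫_ℝ|
        ≤ ‖iteratedDeriv 3 γ s - iteratedDeriv 3 momentCurve s‖ * ‖ξ‖ :=
          abs_real_inner_le_norm _ _
      _ ≤ δ₀ * ‖ξ‖ := by
          exact mul_le_mul_of_nonneg_right
            (hγclose 3 (by norm_num) (by norm_num) s hs) (norm_nonneg _)
  -- f' > 0 on [-1,1]
  have hf'pos : ∀ s ∈ Set.Icc (-1 : ℝ) 1, 0 < ⟪iteratedDeriv 3 γ s, ξ⟫_ℝ := by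
    intro s hs
    have h1 := hf'b s hs
    have h2 := abs_le.mp h1
    nlinarith [hξ3, hξnorm, hδsmall]
  have hfmono : StrictMonoOn f (Set.Icc (-1 : ℝ) 1) := by
    apply strictMonoOn_of_deriv_pos (convex_Icc _ _) (hfc.continuousOn)
    intro x hx
    rw [interior_Icc] at hx
    rw [(hf' x).deriv]
    exact hf'pos x ⟨hx.1.le, hx.2.le⟩
  -- endpoints for IVT
  have h16 : (16 : ℝ) * δ₀ ≤ 1 := by nlinarith
  have hmem_a : (-(16 * δ₀)) ∈ Set.Icc (-1 : ℝ) 1 := by constructor <;> nlinarith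
  have hmem_b : (16 * δ₀) ∈ Set.Icc (-1 : ℝ) 1 := by constructor <;> nlinarith
  have hkey : (16 * δ₀) * ((9/10) * ‖ξ‖) ≤ (16 * δ₀) * ξ 2 :=
    mul_le_mul_of_nonneg_left hξ3 (by linarith)
  have hfa : f (-(16 * δ₀)) < 0 := by
    have h1 := abs_le.mp (hfb _ hmem_a)
    have h2 := abs_le.mp hξ2
    nlinarith [hξnorm, hkey]
  have hfbpos : 0 < f (16 * δ₀) := by
    have h1 := abs_le.mp (hfb _ hmem_b)
    have h2 := abs_le.mp hξ2
    nlinarith [hξnorm, hkey]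
  obtain ⟨s', hs'mem, hs'zero⟩ :=
    intermediate_value_Icc (by nlinarith : (-(16 * δ₀) : ℝ) ≤ 16 * δ₀)
      hfc.continuousOn (by constructor <;> [exact hfa.le; exact hfbpos.le] : (0:ℝ) ∈ _)
  have hs'abs : |s'| ≤ 16 * δ₀ := abs_le.mpr ⟨by linarith [hs'mem.1], hs'mem.2⟩
  have hs'Icc : s' ∈ Set.Icc (-1 : ℝ) 1 := ⟨by linarith [hs'mem.1, hmem_a.1], by
    linarith [hs'mem.2, hmem_b.2]⟩
  have hs'lt1 : s' < 1 := by nlinarith [hs'mem.2]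
  have hs'gt : (-1 : ℝ) < s' := by nlinarith [hs'mem.1]
  refine ⟨s', hs'Icc, hs'zero, hs'abs, ?_, ?_⟩
  · intro s hs hfs
    refine hfmono.injOn hs hs'Icc ?_
    have h1 : f s = 0 := hfs
    rw [h1, hs'zero]
  · intro s hs hne
    rcases lt_or_gt_of_ne hne with hlt | hgt
    · -- s < s' : g strictly decreasing on [-1, s']
      have hanti : StrictAntiOn g (Set.Icc (-1 : ℝ) s') := by
        apply strictAntiOn_of_deriv_neg (convex_Icc _ _) (hgc.continuousOn)
        intro x hx
        rw [interior_Icc] at hx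
        rw [(hg' x).deriv]
        have hxI : x ∈ Set.Icc (-1 : ℝ) 1 := ⟨hx.1.le, hx.2.le.trans hs'Icc.2⟩
        have := hfmono hxI hs'Icc hx.2
        rw [hs'zero] at this
        exact this
      have := hanti ⟨hs.1, hlt.le⟩ ⟨hs'gt.le, le_refl _⟩ hlt
      exact this
    · -- s' < s : g strictly increasing on [s', 1]
      have hmono : StrictMonoOn g (Set.Icc s' (1 : ℝ)) := by
        apply strictMonoOn_of_deriv_pos (convex_Icc _ _) (hgc.continuousOn)
        intro x hx
        rw [interior_Icc] at hx
        rw [(hg' x).deriv]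
        have hxI : x ∈ Set.Icc (-1 : ℝ) 1 := ⟨hs'Icc.1.trans hx.1.le, hx.2.le⟩
        have := hfmono hs'Icc hxI hx.1
        rw [hs'zero] at this
        exact this
      exact hmono ⟨le_refl _, hs'lt1.le⟩ ⟨hgt.le, hs.2⟩ hgt
end
end

section
/- Let 0 < δ₀ ≤ 10^{−10} and γ ∈ 𝔊₃(δ₀). Let ξ ∈ ℝ³, ξ ≠ 0, satisfy ξ₃ ≥ (9/10)|ξ| and |ξ_j| ≤ 8 δ₀ |ξ| for j = 1, 2; let θ₂(ξ) ∈ [−1,1] be the unique solution of ⟨γ''(s), ξ⟩ = 0 in [−1,1], and set u(ξ) := ⟨γ'(θ₂(ξ)), ξ⟩. Then: (i) if u(ξ) > 0, the equation ⟨γ'(s), ξ⟩ = 0 has no solution s ∈ [−1,1]; (ii) if u(ξ) = 0, its only solution in [−1,1] is s = θ₂(ξ); (iii) if u(ξ) < 0, it has exactly two solutions in [−1,1], and each solution s satisfies |s| ≤ 36 δ₀^{1/2}. -/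
open MeasureTheory Real Set
open scoped InnerProductSpace ENNReal NNReal

noncomputable section

namespace Statement6Aux

def E3 (i : Fin 3) : EuclideanSpace ℝ (Fin 3) := EuclideanSpace.single i 1

lemma momentCurve_eq : momentCurve = fun s => s • E3 0 + (s^2/2) • E3 1 + (s^3/6) • E3 2 := by
  funext s
  ext i
  fin_cases i <;> simp [momentCurve, E3, EuclideanSpace.single_apply]

lemma hasDerivAt_mc0 (s : ℝ) :
    HasDerivAt momentCurve (E3 0 + s • E3 1 + (s^2/2) • E3 2) s := by
  rw [momentCurve_eq]
  have h1 : HasDerivAt (fun t : ℝ => t) 1 s := hasDerivAt_id s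
  have h2 : HasDerivAt (fun t : ℝ => t^2/2) s s := by
    have := (hasDerivAt_pow 2 s).div_const 2
    exact this.congr_deriv (by norm_num)
  have h3 : HasDerivAt (fun t : ℝ => t^3/6) (s^2/2) s := by
    have := (hasDerivAt_pow 3 s).div_const 6
    exact this.congr_deriv (by norm_num; ring)
  have := ((h1.smul_const (E3 0)).add (h2.smul_const (E3 1))).add (h3.smul_const (E3 2))
  exact this.congr_deriv (by simp)

def m1 (s : ℝ) : EuclideanSpace ℝ (Fin 3) := E3 0 + s • E3 1 + (s^2/2) • E3 2
def m2 (s : ℝ) : EuclideanSpace ℝ (Fin 3) := E3 1 + s • E3 2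

lemma hasDerivAt_m1 (s : ℝ) : HasDerivAt m1 (m2 s) s := by
  have h2 : HasDerivAt (fun t : ℝ => t^2/2) s s := by
    have := (hasDerivAt_pow 2 s).div_const 2
    exact this.congr_deriv (by norm_num)
  have := (((hasDerivAt_const s (E3 0)).add ((hasDerivAt_id s).smul_const (E3 1))).add
    (h2.smul_const (E3 2)))
  unfold m1 m2
  exact this.congr_deriv (by simp)

lemma hasDerivAt_m2 (s : ℝ) : HasDerivAt m2 (E3 2) s := by
  have := ((hasDerivAt_const s (E3 1)).add ((hasDerivAt_id s).smul_const (E3 2)))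
  unfold m2
  exact this.congr_deriv (by simp)

lemma iteratedDeriv_mc_one : iteratedDeriv 1 momentCurve = m1 := by
  funext s
  rw [iteratedDeriv_one]
  exact (hasDerivAt_mc0 s).deriv

lemma iteratedDeriv_mc_two : iteratedDeriv 2 momentCurve = m2 := by
  rw [iteratedDeriv_succ, iteratedDeriv_mc_one]
  funext s
  exact (hasDerivAt_m1 s).deriv

lemma iteratedDeriv_mc_three : iteratedDeriv 3 momentCurve = fun _ => E3 2 := by
  rw [iteratedDeriv_succ, iteratedDeriv_mc_two]
  funext s
  exact (hasDerivAt_m2 s).deriv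

lemma inner_E3 (ξ : EuclideanSpace ℝ (Fin 3)) (i : Fin 3) : ⟪E3 i, ξ⟫_ℝ = ξ i := by
  simp [E3, EuclideanSpace.inner_single_left]

lemma inner_mc_one (ξ : EuclideanSpace ℝ (Fin 3)) (s : ℝ) :
    ⟪iteratedDeriv 1 momentCurve s, ξ⟫_ℝ = ξ 0 + s * ξ 1 + s^2/2 * ξ 2 := by
  rw [iteratedDeriv_mc_one]
  simp only [m1, inner_add_left, real_inner_smul_left, inner_E3]

lemma inner_mc_two (ξ : EuclideanSpace ℝ (Fin 3)) (s : ℝ) :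
    ⟪iteratedDeriv 2 momentCurve s, ξ⟫_ℝ = ξ 1 + s * ξ 2 := by
  rw [iteratedDeriv_mc_two]
  simp only [m2, inner_add_left, real_inner_smul_left, inner_E3]

lemma inner_mc_three (ξ : EuclideanSpace ℝ (Fin 3)) (s : ℝ) :
    ⟪iteratedDeriv 3 momentCurve s, ξ⟫_ℝ = ξ 2 := by
  rw [iteratedDeriv_mc_three]
  exact inner_E3 ξ 2

end Statement6Aux

open Statement6Aux

set_option maxHeartbeats 1000000 in
theorem statement6
    (δ₀ : ℝ) (hδ₀pos : 0 < δ₀) (hδ₀small : δ₀ ≤ (10 : ℝ) ^ (-(10 : ℤ)))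
    (γ : ℝ → EuclideanSpace ℝ (Fin 3)) (hγ : ContDiff ℝ (⊤ : ℕ∞) γ)
    (hγ0 : γ 0 = 0)
    (hγder : ∀ j : Fin 3, iteratedDeriv ((j : ℕ) + 1) γ 0 = EuclideanSpace.single j 1)
    (hγclose : ∀ j : ℕ, 1 ≤ j → j ≤ 4 → ∀ s ∈ Set.Icc (-1 : ℝ) 1,
      ‖iteratedDeriv j γ s - iteratedDeriv j momentCurve s‖ ≤ δ₀)
    (ξ : EuclideanSpace ℝ (Fin 3)) (hξ : ξ ≠ 0)
    (hξ3 : (9 / 10) * ‖ξ‖ ≤ ξ 2)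
    (hξ1 : |ξ 0| ≤ 8 * δ₀ * ‖ξ‖) (hξ2 : |ξ 1| ≤ 8 * δ₀ * ‖ξ‖)
    (θ₂ : ℝ) (hθ₂mem : θ₂ ∈ Set.Icc (-1 : ℝ) 1)
    (hθ₂ : ⟪iteratedDeriv 2 γ θ₂, ξ⟫_ℝ = 0) :
    (0 < ⟪iteratedDeriv 1 γ θ₂, ξ⟫_ℝ →
      ∀ s ∈ Set.Icc (-1 : ℝ) 1, ⟪iteratedDeriv 1 γ s, ξ⟫_ℝ ≠ 0) ∧
    (⟪iteratedDeriv 1 γ θ₂, ξ⟫_ℝ = 0 →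
      ∀ s ∈ Set.Icc (-1 : ℝ) 1, (⟪iteratedDeriv 1 γ s, ξ⟫_ℝ = 0 ↔ s = θ₂)) ∧
    (⟪iteratedDeriv 1 γ θ₂, ξ⟫_ℝ < 0 →
      ∃ s₁ s₂ : ℝ, s₁ ∈ Set.Icc (-1 : ℝ) 1 ∧ s₂ ∈ Set.Icc (-1 : ℝ) 1 ∧ s₁ ≠ s₂ ∧
        ⟪iteratedDeriv 1 γ s₁, ξ⟫_ℝ = 0 ∧ ⟪iteratedDeriv 1 γ s₂, ξ⟫_ℝ = 0 ∧
        |s₁| ≤ 36 * Real.sqrt δ₀ ∧ |s₂| ≤ 36 * Real.sqrt δ₀ ∧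
        ∀ s ∈ Set.Icc (-1 : ℝ) 1, ⟪iteratedDeriv 1 γ s, ξ⟫_ℝ = 0 → s = s₁ ∨ s = s₂) := by
  have hN : (0:ℝ) < ‖ξ‖ := norm_pos_iff.mpr hξ
  set N := ‖ξ‖ with hNdef
  -- derivative facts
  have hD : ∀ (n : ℕ) (s : ℝ), HasDerivAt (iteratedDeriv n γ) (iteratedDeriv (n+1) γ s) s := by
    intro n s
    rw [iteratedDeriv_succ]
    have hlt : ((n : ℕ∞) : WithTop ℕ∞) < ((⊤ : ℕ∞) : WithTop ℕ∞) :=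
      WithTop.coe_lt_coe.mpr (WithTop.coe_lt_top n)
    exact ((hγ.differentiable_iteratedDeriv n (by exact_mod_cast hlt)).differentiableAt).hasDerivAt
  have hG : ∀ (n : ℕ) (s : ℝ),
      HasDerivAt (fun t => ⟪iteratedDeriv n γ t, ξ⟫_ℝ) ⟪iteratedDeriv (n+1) γ s, ξ⟫_ℝ s := by
    intro n s
    have := (hD n s).inner ℝ (hasDerivAt_const s ξ)
    simpa using this
  set g1 : ℝ → ℝ := fun t => ⟪iteratedDeriv 1 γ t, ξ⟫_ℝ with hg1def
  set g2 : ℝ → ℝ := fun t => ⟪iteratedDeriv 2 γ t, ξ⟫_ℝ with hg2def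
  have hcont1 : Continuous g1 := by
    rw [continuous_iff_continuousAt]; exact fun s => (hG 1 s).continuousAt
  have hcont2 : Continuous g2 := by
    rw [continuous_iff_continuousAt]; exact fun s => (hG 2 s).continuousAt
  -- error bounds
  have herr : ∀ j : ℕ, 1 ≤ j → j ≤ 4 → ∀ s ∈ Set.Icc (-1:ℝ) 1,
      |⟪iteratedDeriv j γ s, ξ⟫_ℝ - ⟪iteratedDeriv j momentCurve s, ξ⟫_ℝ| ≤ δ₀ * N := by
    intro j hj1 hj4 s hs
    rw [← inner_sub_left]
    exact (abs_real_inner_le_norm _ _).trans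
      (mul_le_mul_of_nonneg_right (hγclose j hj1 hj4 s hs) (norm_nonneg _))
  have hδN : 0 < δ₀ * N := mul_pos hδ₀pos hN
  have hδsmall' : δ₀ ≤ (1:ℝ)/10^10 := by
    have : ((10:ℝ)) ^ (-(10:ℤ)) = 1/10^10 := by norm_num [zpow_neg]
    linarith [hδ₀small, this ▸ hδ₀small]
  -- third derivative positive
  have hg3pos : ∀ s ∈ Set.Icc (-1:ℝ) 1, 0 < ⟪iteratedDeriv 3 γ s, ξ⟫_ℝ := by
    intro s hs
    have h := abs_le.mp (herr 3 (by norm_num) (by norm_num) s hs)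
    rw [inner_mc_three] at h
    nlinarith [h.1, hξ3, hN]
  -- g2 strictly monotone on Icc
  have hmono2 : StrictMonoOn g2 (Set.Icc (-1:ℝ) 1) := by
    apply strictMonoOn_of_deriv_pos (convex_Icc _ _) hcont2.continuousOn
    intro s hs
    rw [interior_Icc] at hs
    rw [(hG 2 s).deriv]
    exact hg3pos s ⟨hs.1.le, hs.2.le⟩
  -- sign of g2
  have hg2neg : ∀ s ∈ Set.Icc (-1:ℝ) 1, s < θ₂ → g2 s < 0 := by
    intro s hs hlt
    have := hmono2 hs hθ₂mem hlt
    rw [show g2 θ₂ = 0 from hθ₂] at this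
    exact this
  have hg2pos : ∀ s ∈ Set.Icc (-1:ℝ) 1, θ₂ < s → 0 < g2 s := by
    intro s hs hlt
    have := hmono2 hθ₂mem hs hlt
    rw [show g2 θ₂ = 0 from hθ₂] at this
    exact this
  -- g1 strictly anti on [-1,θ₂], strictly mono on [θ₂,1]
  have hanti : StrictAntiOn g1 (Set.Icc (-1:ℝ) θ₂) := by
    apply strictAntiOn_of_deriv_neg (convex_Icc _ _) hcont1.continuousOn
    intro s hs
    rw [interior_Icc] at hs
    rw [(hG 1 s).deriv]
    exact hg2neg s ⟨hs.1.le, hs.2.le.trans hθ₂mem.2⟩ hs.2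
  have hmono : StrictMonoOn g1 (Set.Icc θ₂ (1:ℝ)) := by
    apply strictMonoOn_of_deriv_pos (convex_Icc _ _) hcont1.continuousOn
    intro s hs
    rw [interior_Icc] at hs
    rw [(hG 1 s).deriv]
    exact hg2pos s ⟨hθ₂mem.1.trans hs.1.le, hs.2.le⟩ hs.1
  -- θ₂ is the strict minimum
  have hmin : ∀ s ∈ Set.Icc (-1:ℝ) 1, s ≠ θ₂ → g1 θ₂ < g1 s := by
    intro s hs hne
    rcases lt_or_gt_of_ne hne with h | h
    · exact hanti ⟨hs.1, h.le⟩ ⟨hθ₂mem.1, le_refl _⟩ h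
    · exact hmono ⟨le_refl _, hθ₂mem.2⟩ ⟨h.le, hs.2⟩ h
  refine ⟨?_, ?_, ?_⟩
  · -- case u > 0
    intro hu s hs
    by_cases hne : s = θ₂
    · rw [hne]; exact ne_of_gt hu
    · have := hmin s hs hne
      have : (0:ℝ) < g1 s := lt_trans hu this
      exact ne_of_gt this
  · -- case u = 0
    intro hu s hs
    constructor
    · intro h0
      by_contra hne
      have := hmin s hs hne
      rw [show g1 θ₂ = 0 from hu, show g1 s = 0 from h0] at this
      exact lt_irrefl _ this
    · intro h; rw [h]; exact hu
  · -- case u < 0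
    intro hu
    set r := Real.sqrt δ₀ with hrdef
    have hr0 : 0 < r := Real.sqrt_pos.mpr hδ₀pos
    have hr2 : r^2 = δ₀ := Real.sq_sqrt hδ₀pos.le
    have hrle : r ≤ 1/10^5 := by
      have h1 : δ₀ ≤ (1/10^5 : ℝ)^2 := by rw [← hr2] at hδsmall' ⊢; nlinarith [hδsmall', hr2]
      calc r = Real.sqrt δ₀ := hrdef
        _ ≤ Real.sqrt ((1/10^5:ℝ)^2) := Real.sqrt_le_sqrt h1
        _ = 1/10^5 := Real.sqrt_sq (by norm_num)
    have ha1 : 36 * r ≤ 1 := by nlinarith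
    -- positivity away from 0
    have hgpos : ∀ s ∈ Set.Icc (-1:ℝ) 1, 36 * r ≤ |s| → 0 < g1 s := by
      intro s hs habs
      have h := abs_le.mp (herr 1 (by norm_num) (by norm_num) s hs)
      rw [inner_mc_one] at h
      have hs1 : |s| ≤ 1 := abs_le.mpr ⟨hs.1, hs.2⟩
      have hs2 : 1296 * δ₀ ≤ s^2 := by
        have := pow_le_pow_left₀ (by positivity) habs 2
        rw [sq_abs] at this
        nlinarith [this, hr2]
      have hkey : 1296 * δ₀ * ((9/10) * N) ≤ s^2 * ξ 2 :=
        mul_le_mul hs2 hξ3 (by positivity) (by nlinarith)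
      have hb1 : -(8 * δ₀ * N) ≤ ξ 0 := (abs_le.mp hξ1).1
      have hb2 : -(8 * δ₀ * N) ≤ s * ξ 1 := by
        have : |s * ξ 1| ≤ 8 * δ₀ * N := by
          rw [abs_mul]
          calc |s| * |ξ 1| ≤ 1 * (8 * δ₀ * N) :=
            mul_le_mul hs1 hξ2 (abs_nonneg _) one_pos.le
          _ = 8 * δ₀ * N := by ring
        linarith [(abs_le.mp this).1]
      nlinarith [h.1, hδN]
    -- |θ₂| < 36r
    have hθabs : |θ₂| < 36 * r := by
      by_contra hcon
      push_neg at hcon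
      exact absurd (hgpos θ₂ hθ₂mem hcon) (not_lt.mpr hu.le)
    have hθlt : θ₂ < 36 * r := lt_of_le_of_lt (le_abs_self _) hθabs
    have hθgt : -(36 * r) < θ₂ := by
      have := neg_lt_of_abs_lt hθabs
      linarith
    have hamem : (36 * r : ℝ) ∈ Set.Icc (-1:ℝ) 1 := ⟨by nlinarith, ha1⟩
    have hnamem : (-(36 * r) : ℝ) ∈ Set.Icc (-1:ℝ) 1 := ⟨by linarith, by nlinarith⟩
    have hga : 0 < g1 (36 * r) := hgpos _ hamem (by rw [abs_of_pos (by positivity)])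
    have hgna : 0 < g1 (-(36 * r)) := hgpos _ hnamem (by rw [abs_neg, abs_of_pos (by positivity)])
    -- IVT for s₁ on [-(36r), θ₂]
    have hivt1 : (0:ℝ) ∈ g1 '' Set.Icc (-(36*r)) θ₂ := by
      apply intermediate_value_Icc' hθgt.le hcont1.continuousOn
      exact ⟨hu.le, hgna.le⟩
    obtain ⟨s₁, hs₁mem, hs₁⟩ := hivt1
    have hivt2 : (0:ℝ) ∈ g1 '' Set.Icc θ₂ (36*r) := by
      apply intermediate_value_Icc hθlt.le hcont1.continuousOn
      exact ⟨hu.le, hga.le⟩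
    obtain ⟨s₂, hs₂mem, hs₂⟩ := hivt2
    have huθ : g1 θ₂ < 0 := hu
    have hs₁Icc : s₁ ∈ Set.Icc (-1:ℝ) 1 :=
      ⟨le_trans hnamem.1 hs₁mem.1, le_trans hs₁mem.2 hθ₂mem.2⟩
    have hs₂Icc : s₂ ∈ Set.Icc (-1:ℝ) 1 :=
      ⟨le_trans hθ₂mem.1 hs₂mem.1, le_trans hs₂mem.2 hamem.2⟩
    have hs₁ne : s₁ ≠ θ₂ := by
      intro h; rw [h] at hs₁; exact absurd hs₁ huθ.ne
    have hs₂ne : s₂ ≠ θ₂ := by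
      intro h; rw [h] at hs₂; exact absurd hs₂ huθ.ne
    have hs₁lt : s₁ < θ₂ := lt_of_le_of_ne hs₁mem.2 hs₁ne
    have hs₂gt : θ₂ < s₂ := lt_of_le_of_ne hs₂mem.1 (Ne.symm hs₂ne)
    refine ⟨s₁, s₂, hs₁Icc, hs₂Icc, ne_of_lt (lt_trans hs₁lt hs₂gt), hs₁, hs₂, ?_, ?_, ?_⟩
    · exact abs_le.mpr ⟨hs₁mem.1, le_trans hs₁mem.2 hθlt.le⟩
    · exact abs_le.mpr ⟨le_trans hθgt.le hs₂mem.1, hs₂mem.2⟩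
    · intro s hs h0
      have h0' : g1 s = 0 := h0
      have hsne : s ≠ θ₂ := by
        intro h; rw [h] at h0; rw [h0] at hu; exact lt_irrefl _ hu
      rcases lt_or_gt_of_ne hsne with h | h
      · left
        apply hanti.injOn ⟨hs.1, h.le⟩ ⟨hs₁Icc.1, hs₁mem.2⟩
        rw [h0', hs₁]
      · right
        apply hmono.injOn ⟨h.le, hs.2⟩ ⟨hs₂mem.1, hs₂Icc.2⟩
        rw [h0', hs₂]
end
end

section
/- There exist absolute constants 0 < c ≤ C with the following property. Let 0 < δ₀ ≤ 10^{−10}, γ ∈ 𝔊₃(δ₀), and let ξ ∈ ℝ³, ξ ≠ 0, satisfy ξ₃ ≥ (9/10)|ξ| and |ξ_j| ≤ 8 δ₀ |ξ| for j = 1, 2. Let θ₂(ξ) ∈ [−1,1] be the unique zero of s ↦ ⟨γ''(s), ξ⟩ in [−1,1] and u(ξ) := ⟨γ'(θ₂(ξ)), ξ⟩, and assume u(ξ) < 0. Let θ₁^−(ξ) ≤ θ₁^+(ξ) be the two zeros of s ↦ ⟨γ'(s), ξ⟩ in [−1,1], and set v^±(ξ) := ⟨γ''(θ₁^±(ξ)),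 ξ⟩. Then each of the five quantities |v^+(ξ)|/|ξ|, |v^−(ξ)|/|ξ|, |θ₁^+(ξ) − θ₂(ξ)|, |θ₁^−(ξ) − θ₂(ξ)| and |θ₁^+(ξ) − θ₁^−(ξ)| lies in the interval [c (|u(ξ)|/|ξ|)^{1/2}, C (|u(ξ)|/|ξ|)^{1/2}]. -/
open MeasureTheory Real Set
open scoped InnerProductSpace ENNReal NNReal

noncomputable section

abbrev E3 (i : Fin 3) : EuclideanSpace ℝ (Fin 3) := EuclideanSpace.single i 1

lemma momentCurve_eq : momentCurve = fun s : ℝ =>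
    s • E3 0 + (s^2/2) • E3 1 + (s^3/6) • E3 2 := by
  funext s; ext i
  fin_cases i <;>
    simp [momentCurve, E3, EuclideanSpace.single_apply, PiLp.add_apply, PiLp.smul_apply,
      EuclideanSpace.equiv]

lemma iteratedDeriv_mc_one : iteratedDeriv 1 momentCurve =
    fun s : ℝ => E3 0 + s • E3 1 + (s^2/2) • E3 2 := by
  rw [iteratedDeriv_one, momentCurve_eq]
  funext s
  have h : HasDerivAt (fun s : ℝ => s • E3 0 + (s^2/2) • E3 1 + (s^3/6) • E3 2)
      ((1:ℝ) • E3 0 + (((2:ℕ) * s ^ 1)/2) • E3 1 + (((3:ℕ) * s ^ 2)/6) • E3 2) s :=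
    (((hasDerivAt_id s).smul_const _).add
      (((hasDerivAt_pow 2 s).div_const 2).smul_const _)).add
      (((hasDerivAt_pow 3 s).div_const 6).smul_const _)
  rw [h.deriv]
  push_cast
  module

lemma iteratedDeriv_mc_two : iteratedDeriv 2 momentCurve = fun s : ℝ => E3 1 + s • E3 2 := by
  rw [show iteratedDeriv 2 momentCurve = deriv (iteratedDeriv 1 momentCurve) from
    iteratedDeriv_succ, iteratedDeriv_mc_one]
  funext s
  have h : HasDerivAt (fun s : ℝ => E3 0 + s • E3 1 + (s^2/2) • E3 2)
      ((0 : EuclideanSpace ℝ (Fin 3)) + (1:ℝ) • E3 1 + (((2:ℕ) * s ^ 1)/2) • E3 2) s :=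
    ((hasDerivAt_const s _).add ((hasDerivAt_id s).smul_const _)).add
      (((hasDerivAt_pow 2 s).div_const 2).smul_const _)
  rw [h.deriv]
  push_cast
  module

lemma iteratedDeriv_mc_three : iteratedDeriv 3 momentCurve = fun _ : ℝ => E3 2 := by
  rw [show iteratedDeriv 3 momentCurve = deriv (iteratedDeriv 2 momentCurve) from
    iteratedDeriv_succ, iteratedDeriv_mc_two]
  funext s
  have h : HasDerivAt (fun s : ℝ => E3 1 + s • E3 2)
      ((0 : EuclideanSpace ℝ (Fin 3)) + (1:ℝ) • E3 2) s :=
    (hasDerivAt_const s _).add ((hasDerivAt_id s).smul_const _)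
  rw [h.deriv]
  module

lemma inner_E3 (i : Fin 3) (ξ : EuclideanSpace ℝ (Fin 3)) : ⟪E3 i, ξ⟫_ℝ = ξ i := by
  simp [E3, EuclideanSpace.inner_single_left]

lemma abs_coord_le (i : Fin 3) (ξ : EuclideanSpace ℝ (Fin 3)) : |ξ i| ≤ ‖ξ‖ := by
  have h := abs_real_inner_le_norm (E3 i) ξ
  simpa [inner_E3, E3, EuclideanSpace.norm_single] using h

lemma le_of_sq_le_sq' {a b : ℝ} (ha : 0 ≤ a) (hb : 0 ≤ b) (h : a^2 ≤ b^2) : a ≤ b := by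
  have h' := Real.sqrt_le_sqrt h
  rwa [Real.sqrt_sq ha, Real.sqrt_sq hb] at h'

set_option maxHeartbeats 2000000 in
theorem statement7 :
    ∃ c C : ℝ, 0 < c ∧ c ≤ C ∧
      ∀ δ₀ : ℝ, 0 < δ₀ → δ₀ ≤ (10 : ℝ) ^ (-(10 : ℤ)) →
      ∀ γ : ℝ → EuclideanSpace ℝ (Fin 3), ContDiff ℝ (⊤ : ℕ∞) γ →
        γ 0 = 0 →
        (∀ j : Fin 3, iteratedDeriv ((j : ℕ) + 1) γ 0 = EuclideanSpace.single j 1) →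
        (∀ j : ℕ, 1 ≤ j → j ≤ 4 → ∀ s ∈ Set.Icc (-1 : ℝ) 1,
          ‖iteratedDeriv j γ s - iteratedDeriv j momentCurve s‖ ≤ δ₀) →
      ∀ ξ : EuclideanSpace ℝ (Fin 3), ξ ≠ 0 →
        (9 / 10) * ‖ξ‖ ≤ ξ 2 → |ξ 0| ≤ 8 * δ₀ * ‖ξ‖ → |ξ 1| ≤ 8 * δ₀ * ‖ξ‖ →
      ∀ θ₂ θm θp : ℝ,
        θ₂ ∈ Set.Icc (-1 : ℝ) 1 → ⟪iteratedDeriv 2 γ θ₂, ξ⟫_ℝ = 0 →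
        ⟪iteratedDeriv 1 γ θ₂, ξ⟫_ℝ < 0 →
        θm ∈ Set.Icc (-1 : ℝ) 1 → θp ∈ Set.Icc (-1 : ℝ) 1 → θm ≤ θp →
        ⟪iteratedDeriv 1 γ θm, ξ⟫_ℝ = 0 → ⟪iteratedDeriv 1 γ θp, ξ⟫_ℝ = 0 →
        (∀ s ∈ Set.Icc (-1 : ℝ) 1, ⟪iteratedDeriv 1 γ s, ξ⟫_ℝ = 0 → s = θm ∨ s = θp) →
        (c * Real.sqrt (|⟪iteratedDeriv 1 γ θ₂, ξ⟫_ℝ| / ‖ξ‖)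
            ≤ |⟪iteratedDeriv 2 γ θp, ξ⟫_ℝ| / ‖ξ‖ ∧
          |⟪iteratedDeriv 2 γ θp, ξ⟫_ℝ| / ‖ξ‖
            ≤ C * Real.sqrt (|⟪iteratedDeriv 1 γ θ₂, ξ⟫_ℝ| / ‖ξ‖)) ∧
        (c * Real.sqrt (|⟪iteratedDeriv 1 γ θ₂, ξ⟫_ℝ| / ‖ξ‖)
            ≤ |⟪iteratedDeriv 2 γ θm, ξ⟫_ℝ| / ‖ξ‖ ∧
          |⟪iteratedDeriv 2 γ θm, ξ⟫_ℝ| / ‖ξ‖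
            ≤ C * Real.sqrt (|⟪iteratedDeriv 1 γ θ₂, ξ⟫_ℝ| / ‖ξ‖)) ∧
        (c * Real.sqrt (|⟪iteratedDeriv 1 γ θ₂, ξ⟫_ℝ| / ‖ξ‖) ≤ |θp - θ₂| ∧
          |θp - θ₂| ≤ C * Real.sqrt (|⟪iteratedDeriv 1 γ θ₂, ξ⟫_ℝ| / ‖ξ‖)) ∧
        (c * Real.sqrt (|⟪iteratedDeriv 1 γ θ₂, ξ⟫_ℝ| / ‖ξ‖) ≤ |θm - θ₂| ∧
          |θm - θ₂| ≤ C * Real.sqrt (|⟪iteratedDeriv 1 γ θ₂, ξ⟫_ℝ| / ‖ξ‖)) ∧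
        (c * Real.sqrt (|⟪iteratedDeriv 1 γ θ₂, ξ⟫_ℝ| / ‖ξ‖) ≤ |θp - θm| ∧
          |θp - θm| ≤ C * Real.sqrt (|⟪iteratedDeriv 1 γ θ₂, ξ⟫_ℝ| / ‖ξ‖)) := by
  refine ⟨4/5, 4, by norm_num, by norm_num, ?_⟩
  intro δ₀ hδ hδ' γ hγ hγ0 hγe happrox ξ hξne hξ2 hξ0 hξ1 θ₂ θm θp hθ₂ h2z h1neg hθm hθp hmp
    hzm hzp huniq
  clear hγ0 hγe
  set n : ℝ := ‖ξ‖ with hn_def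
  have hn : 0 < n := norm_pos_iff.mpr hξne
  -- the three scalar functions
  set g : ℝ → ℝ := fun s => ⟪iteratedDeriv 1 γ s, ξ⟫_ℝ with hgdef
  set g1 : ℝ → ℝ := fun s => ⟪iteratedDeriv 2 γ s, ξ⟫_ℝ with hg1def
  set g2 : ℝ → ℝ := fun s => ⟪iteratedDeriv 3 γ s, ξ⟫_ℝ with hg2def
  -- differentiability plumbing
  have hdiff : ∀ k : ℕ, Differentiable ℝ (iteratedDeriv k γ) := by
    intro k
    exact hγ.differentiable_iteratedDeriv k (by exact_mod_cast ENat.coe_lt_top k)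
  have hder : ∀ k : ℕ, ∀ s : ℝ, HasDerivAt (iteratedDeriv k γ) (iteratedDeriv (k+1) γ s) s := by
    intro k s
    rw [iteratedDeriv_succ]
    exact (hdiff k s).hasDerivAt
  have hg : ∀ s, HasDerivAt g (g1 s) s := by
    intro s
    have h := (hder 1 s).inner ℝ (hasDerivAt_const s ξ)
    simpa only [inner_zero_right, zero_add] using h
  have hg1 : ∀ s, HasDerivAt g1 (g2 s) s := by
    intro s
    have h := (hder 2 s).inner ℝ (hasDerivAt_const s ξ)
    simpa only [inner_zero_right, zero_add] using h
  -- Cauchy-Schwarz comparison with the moment curve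
  have key : ∀ j : ℕ, 1 ≤ j → j ≤ 4 → ∀ s ∈ Icc (-1:ℝ) 1,
      |⟪iteratedDeriv j γ s, ξ⟫_ℝ - ⟪iteratedDeriv j momentCurve s, ξ⟫_ℝ| ≤ δ₀ * n := by
    intro j h1 h4 s hs
    rw [← inner_sub_left]
    exact (abs_real_inner_le_norm _ _).trans
      (mul_le_mul_of_nonneg_right (happrox j h1 h4 s hs) (norm_nonneg ξ))
  have hmc1 : ∀ s : ℝ, ⟪iteratedDeriv 1 momentCurve s, ξ⟫_ℝ = ξ 0 + s * ξ 1 + s^2/2 * ξ 2 := by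
    intro s
    rw [iteratedDeriv_mc_one]
    simp only [inner_add_left, real_inner_smul_left, inner_E3]
  have hmc3 : ∀ s : ℝ, ⟪iteratedDeriv 3 momentCurve s, ξ⟫_ℝ = ξ 2 := by
    intro s
    rw [iteratedDeriv_mc_three]
    exact inner_E3 2 ξ
  have hδsmall : δ₀ ≤ 1/100 := le_trans hδ' (by norm_num)
  have hδn : δ₀ * n ≤ (1/100) * n := mul_le_mul_of_nonneg_right hδsmall hn.le
  have hξ2n : ξ 2 ≤ n := (le_abs_self _).trans (abs_coord_le 2 ξ)
  -- bounds on g2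
  have hK : ∀ s ∈ Icc (-1:ℝ) 1, (4/5)*n ≤ g2 s ∧ g2 s ≤ 2*n := by
    intro s hs
    have h := key 3 (by norm_num) (by norm_num) s hs
    rw [hmc3 s] at h
    have h' := abs_le.mp h
    exact ⟨by linarith [h'.1], by linarith [h'.2]⟩
  -- endpoint positivity
  have hcorner : ∀ s ∈ Icc (-1:ℝ) 1, ξ 0 + s * ξ 1 + s^2/2 * ξ 2 - δ₀ * n ≤ g s := by
    intro s hs
    have h := key 1 (by norm_num) (by norm_num) s hs
    rw [hmc1 s] at h
    have h' := abs_le.mp h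
    linarith [h'.1]
  have hg1pos : 0 < g 1 := by
    have h := hcorner 1 (by norm_num)
    have h0 := abs_le.mp hξ0
    have h1 := abs_le.mp hξ1
    have h8 : 8 * (δ₀ * n) ≤ 8 * ((1/100) * n) :=
      mul_le_mul_of_nonneg_left hδn (by norm_num)
    have := hξ2
    linarith
  have hgm1pos : 0 < g (-1) := by
    have h := hcorner (-1) (by norm_num)
    have h0 := abs_le.mp hξ0
    have h1 := abs_le.mp hξ1
    have h8 : 8 * (δ₀ * n) ≤ 8 * ((1/100) * n) :=
      mul_le_mul_of_nonneg_left hδn (by norm_num)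
    have := hξ2
    linarith
  -- ordering θm < θ₂ < θp
  have hgc : Continuous g := by
    refine continuous_iff_continuousAt.mpr fun s => (hg s).continuousAt
  have h1neg' : g θ₂ < 0 := h1neg
  have h2z' : g1 θ₂ = 0 := h2z
  have hzm' : g θm = 0 := hzm
  have hzp' : g θp = 0 := hzp
  have hθ₂m : -1 < θ₂ := by
    rcases eq_or_lt_of_le hθ₂.1 with h | h
    · exfalso; rw [← h] at h1neg'; linarith
    · exact h
  have hθ₂p : θ₂ < 1 := by
    rcases eq_or_lt_of_le hθ₂.2 with h | h
    · exfalso; rw [h] at h1neg'; linarith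
    · exact h
  obtain ⟨w, hwmem, hw0⟩ : ∃ w ∈ Icc (-1:ℝ) θ₂, g w = 0 := by
    have h := intermediate_value_Icc' hθ₂m.le hgc.continuousOn (a := -1) (b := θ₂)
    have : (0:ℝ) ∈ Icc (g θ₂) (g (-1)) := ⟨h1neg'.le, hgm1pos.le⟩
    obtain ⟨w, hw, hw0⟩ := h this
    exact ⟨w, hw, hw0⟩
  obtain ⟨z, hzmem, hz0⟩ : ∃ z ∈ Icc θ₂ (1:ℝ), g z = 0 := by
    have h := intermediate_value_Icc hθ₂p.le hgc.continuousOn (a := θ₂) (b := 1)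
    have : (0:ℝ) ∈ Icc (g θ₂) (g 1) := ⟨h1neg'.le, hg1pos.le⟩
    obtain ⟨z, hz, hz0⟩ := h this
    exact ⟨z, hz, hz0⟩
  have hwθ : w < θ₂ := lt_of_le_of_ne hwmem.2 (fun h => by rw [h] at hw0; linarith [h1neg'])
  have hθz : θ₂ < z := lt_of_le_of_ne hzmem.1 (fun h => by rw [← h] at hz0; linarith [h1neg'])
  have hord : θm < θ₂ ∧ θ₂ < θp := by
    have hw' := huniq w ⟨hwmem.1, hwmem.2.trans hθ₂.2⟩ hw0
    have hz' := huniq z ⟨hθ₂.1.trans hzmem.1, hzmem.2⟩ hz0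
    rcases hw' with h1 | h1 <;> rcases hz' with h2 | h2 <;> constructor <;> linarith
  obtain ⟨hm2, hp2⟩ := hord
  -- MVT two-sided bound for g1
  have hg1cont : ContinuousOn g1 (Icc (-1:ℝ) 1) :=
    (continuous_iff_continuousAt.mpr fun s => (hg1 s).continuousAt).continuousOn
  have hg1diff : DifferentiableOn ℝ g1 (interior (Icc (-1:ℝ) 1)) :=
    fun s _ => (hg1 s).differentiableAt.differentiableWithinAt
  have hA : ∀ x ∈ Icc (-1:ℝ) 1, ∀ y ∈ Icc (-1:ℝ) 1, x ≤ y →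
      (4/5)*n*(y-x) ≤ g1 y - g1 x ∧ g1 y - g1 x ≤ 2*n*(y-x) := by
    intro x hx y hy hxy
    constructor
    · exact (convex_Icc (-1:ℝ) 1).mul_sub_le_image_sub_of_le_deriv hg1cont hg1diff
        (fun s hs => by rw [(hg1 s).deriv]; exact (hK s (interior_subset hs)).1) x hx y hy hxy
    · exact (convex_Icc (-1:ℝ) 1).image_sub_le_mul_sub_of_deriv_le hg1cont hg1diff
        (fun s hs => by rw [(hg1 s).deriv]; exact (hK s (interior_subset hs)).2) x hx y hy hxy
  -- bounds on g1 on both sides of θ₂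
  have hg1left : ∀ s ∈ Icc (-1:ℝ) 1, s ≤ θ₂ →
      -(2*n*(θ₂-s)) ≤ g1 s ∧ g1 s ≤ -((4/5)*n*(θ₂-s)) := by
    intro s hs hsθ
    have h := hA s hs θ₂ hθ₂ hsθ
    rw [h2z'] at h
    exact ⟨by linarith [h.2], by linarith [h.1]⟩
  have hg1right : ∀ s ∈ Icc (-1:ℝ) 1, θ₂ ≤ s →
      (4/5)*n*(s-θ₂) ≤ g1 s ∧ g1 s ≤ 2*n*(s-θ₂) := by
    intro s hs hsθ
    have h := hA θ₂ hθ₂ s hs hsθ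
    rw [h2z'] at h
    exact ⟨by linarith [h.1], by linarith [h.2]⟩
  -- quadratic comparison functions
  have hθmI : θm ∈ Icc (-1:ℝ) 1 := hθm
  have hθpI : θp ∈ Icc (-1:ℝ) 1 := hθp
  set u : ℝ := g θ₂ with hudef
  have hIccm : Icc θm θ₂ ⊆ Icc (-1:ℝ) 1 := Icc_subset_Icc hθm.1 hθ₂.2
  have hIccp : Icc θ₂ θp ⊆ Icc (-1:ℝ) 1 := Icc_subset_Icc hθ₂.1 hθp.2
  have hAd : ∀ (a : ℝ) (s : ℝ), HasDerivAt (fun t => g t - a * (t - θ₂)^2)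
      (g1 s - a * (2 * (s - θ₂))) s := by
    intro a s
    have h1 : HasDerivAt (fun t : ℝ => (t - θ₂)^2) (2 * (s - θ₂)) s := by
      have h := ((hasDerivAt_id s).sub_const θ₂).pow 2
      simp at h
      exact h
    exact (hg s).sub (h1.const_mul a)
  have hAcont : ∀ a : ℝ, ContinuousOn (fun t => g t - a * (t - θ₂)^2) (univ : Set ℝ) := by
    intro a
    exact (continuous_iff_continuousAt.mpr fun s => (hAd a s).continuousAt).continuousOn
  -- On [θm, θ₂]
  have hQm1 : -u ≤ n * (θ₂ - θm)^2 := by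
    have hb : ∀ s ∈ interior (Icc θm θ₂), (0:ℝ) ≤ deriv (fun t => g t - n * (t - θ₂)^2) s := by
      intro s hs
      rw [interior_Icc] at hs
      rw [(hAd n s).deriv]
      have := (hg1left s (hIccm (Ioo_subset_Icc_self hs)) hs.2.le).1
      linarith
    have := (convex_Icc θm θ₂).mul_sub_le_image_sub_of_le_deriv
      ((hAcont n).mono (subset_univ _))
      (fun s _ => (hAd n s).differentiableAt.differentiableWithinAt) hb
      θm ⟨le_refl _, hm2.le⟩ θ₂ ⟨hm2.le, le_refl _⟩ hm2.le
    have hgm : g θm = 0 := hzm'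
    rw [hgm] at this
    linarith [this]
  have hQm2 : (2/5) * n * (θ₂ - θm)^2 ≤ -u := by
    have hb : ∀ s ∈ interior (Icc θm θ₂),
        deriv (fun t => g t - (2/5)*n * (t - θ₂)^2) s ≤ 0 := by
      intro s hs
      rw [interior_Icc] at hs
      rw [(hAd ((2/5)*n) s).deriv]
      have := (hg1left s (hIccm (Ioo_subset_Icc_self hs)) hs.2.le).2
      linarith
    have := (convex_Icc θm θ₂).image_sub_le_mul_sub_of_deriv_le
      ((hAcont _).mono (subset_univ _))
      (fun s _ => (hAd ((2/5)*n) s).differentiableAt.differentiableWithinAt) hb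
      θm ⟨le_refl _, hm2.le⟩ θ₂ ⟨hm2.le, le_refl _⟩ hm2.le
    have hgm : g θm = 0 := hzm'
    rw [hgm] at this
    linarith [this]
  -- On [θ₂, θp]
  have hQp1 : -u ≤ n * (θp - θ₂)^2 := by
    have hb : ∀ s ∈ interior (Icc θ₂ θp),
        deriv (fun t => g t - n * (t - θ₂)^2) s ≤ 0 := by
      intro s hs
      rw [interior_Icc] at hs
      rw [(hAd n s).deriv]
      have := (hg1right s (hIccp (Ioo_subset_Icc_self hs)) hs.1.le).2
      linarith
    have := (convex_Icc θ₂ θp).image_sub_le_mul_sub_of_deriv_le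
      ((hAcont n).mono (subset_univ _))
      (fun s _ => (hAd n s).differentiableAt.differentiableWithinAt) hb
      θ₂ ⟨le_refl _, hp2.le⟩ θp ⟨hp2.le, le_refl _⟩ hp2.le
    have hgp : g θp = 0 := hzp'
    rw [hgp] at this
    linarith [this]
  have hQp2 : (2/5) * n * (θp - θ₂)^2 ≤ -u := by
    have hb : ∀ s ∈ interior (Icc θ₂ θp),
        (0:ℝ) ≤ deriv (fun t => g t - (2/5)*n * (t - θ₂)^2) s := by
      intro s hs
      rw [interior_Icc] at hs
      rw [(hAd ((2/5)*n) s).deriv]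
      have := (hg1right s (hIccp (Ioo_subset_Icc_self hs)) hs.1.le).1
      linarith
    have := (convex_Icc θ₂ θp).mul_sub_le_image_sub_of_le_deriv
      ((hAcont _).mono (subset_univ _))
      (fun s _ => (hAd ((2/5)*n) s).differentiableAt.differentiableWithinAt) hb
      θ₂ ⟨le_refl _, hp2.le⟩ θp ⟨hp2.le, le_refl _⟩ hp2.le
    have hgp : g θp = 0 := hzp'
    rw [hgp] at this
    linarith [this]
  -- the scale r
  have hun : 0 < -u / n := div_pos (by linarith) hn
  set r : ℝ := Real.sqrt (-u / n) with hrdef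
  have hr : 0 < r := Real.sqrt_pos.mpr hun
  have hr2 : r^2 = -u / n := Real.sq_sqrt hun.le
  have hrm1 : r ≤ θ₂ - θm := by
    have h1 : r^2 ≤ (θ₂ - θm)^2 := by
      rw [hr2, div_le_iff₀ hn]; linarith [hQm1]
    exact le_of_sq_le_sq' hr.le (by linarith) h1
  have hrm2 : θ₂ - θm ≤ 2 * r := by
    have h1 : (θ₂ - θm)^2 ≤ (2*r)^2 := by
      have he : (2*r)^2 = (4 * -u) / n := by rw [mul_pow, hr2]; ring
      rw [he, le_div_iff₀ hn]; linarith [hQm2]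
    exact le_of_sq_le_sq' (by linarith) (by linarith) h1
  have hrp1 : r ≤ θp - θ₂ := by
    have h1 : r^2 ≤ (θp - θ₂)^2 := by
      rw [hr2, div_le_iff₀ hn]; linarith [hQp1]
    exact le_of_sq_le_sq' hr.le (by linarith) h1
  have hrp2 : θp - θ₂ ≤ 2 * r := by
    have h1 : (θp - θ₂)^2 ≤ (2*r)^2 := by
      have he : (2*r)^2 = (4 * -u) / n := by rw [mul_pow, hr2]; ring
      rw [he, le_div_iff₀ hn]; linarith [hQp2]
    exact le_of_sq_le_sq' (by linarith) (by linarith) h1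
  -- v bounds
  have hvp := hg1right θp hθpI hp2.le
  have hvm := hg1left θm hθmI hm2.le
  -- translate target sqrt
  have habs : |u| = -u := abs_of_neg h1neg'
  have htarget : Real.sqrt (|g θ₂| / n) = r := by rw [habs, hrdef]
  -- final assembly
  have hgoal :
      ((4/5) * r ≤ |g1 θp| / n ∧ |g1 θp| / n ≤ 4 * r) ∧
      ((4/5) * r ≤ |g1 θm| / n ∧ |g1 θm| / n ≤ 4 * r) ∧
      ((4/5) * r ≤ |θp - θ₂| ∧ |θp - θ₂| ≤ 4 * r) ∧
      ((4/5) * r ≤ |θm - θ₂| ∧ |θm - θ₂| ≤ 4 * r) ∧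
      ((4/5) * r ≤ |θp - θm| ∧ |θp - θm| ≤ 4 * r) := by
    have hprodp : (0:ℝ) ≤ (4/5)*n*(θp - θ₂) :=
      mul_nonneg (mul_nonneg (by norm_num) hn.le) (by linarith)
    have hprodm : (0:ℝ) ≤ (4/5)*n*(θ₂ - θm) :=
      mul_nonneg (mul_nonneg (by norm_num) hn.le) (by linarith)
    have hmulp1 : (4/5)*n*r ≤ (4/5)*n*(θp - θ₂) :=
      mul_le_mul_of_nonneg_left hrp1 (mul_nonneg (by norm_num) hn.le)
    have hmulp2 : 2*n*(θp - θ₂) ≤ 2*n*(2*r) :=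
      mul_le_mul_of_nonneg_left hrp2 (mul_nonneg (by norm_num) hn.le)
    have hmulm1 : (4/5)*n*r ≤ (4/5)*n*(θ₂ - θm) :=
      mul_le_mul_of_nonneg_left hrm1 (mul_nonneg (by norm_num) hn.le)
    have hmulm2 : 2*n*(θ₂ - θm) ≤ 2*n*(2*r) :=
      mul_le_mul_of_nonneg_left hrm2 (mul_nonneg (by norm_num) hn.le)
    have habsp : |g1 θp| = g1 θp := abs_of_nonneg (le_trans hprodp hvp.1)
    have habsm : |g1 θm| = -g1 θm := abs_of_nonpos (by linarith [hvm.2, hprodm])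
    have h1 : |θp - θ₂| = θp - θ₂ := abs_of_pos (by linarith)
    have h2 : |θm - θ₂| = θ₂ - θm := by rw [abs_sub_comm]; exact abs_of_pos (by linarith)
    have h3 : |θp - θm| = θp - θm := abs_of_pos (by linarith)
    rw [habsp, habsm, h1, h2, h3]
    refine ⟨⟨?_, ?_⟩, ⟨?_, ?_⟩, ⟨?_, ?_⟩, ⟨?_, ?_⟩, ⟨?_, ?_⟩⟩
    · rw [le_div_iff₀ hn]; linarith [hvp.1, hmulp1]
    · rw [div_le_iff₀ hn]; linarith [hvp.2, hmulp2]
    · rw [le_div_iff₀ hn]; linarith [hvm.2, hmulm1]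
    · rw [div_le_iff₀ hn]; linarith [hvm.1, hmulm2]
    · linarith
    · linarith
    · linarith
    · linarith
    · linarith
    · linarith
  rw [← htarget] at hgoal
  exact hgoal
end
end

section
/- Let N ∈ ℕ₀ and C₀, C₁, …, C_{N+1} ≥ 1. There exists a constant C(N), depending only on N and C₀, …, C_{N+1}, with the following property. Let I ⊆ ℝ be an open interval, a ∈ C_c^∞(ℝ) supported in I, φ ∈ C^∞(I) real-valued, and R ≥ 1, and suppose that for every s in the support of a: (i) φ'(s) ≠ 0; (ii) |φ^{(j)}(s)| ≤ C_j R^{−(j−1)} |φ'(s)|^j for 2 ≤ j ≤ N+1; (iii) |a^{(j)}(s)| ≤ C_j R^{−j} |φ'(s)|^j for 0 ≤ j ≤ N+1. Then |∫_ℝ e^{i φ(s)} a(s) ds| ≤ C(N) · |supp a| · R^{−N}, where |supp a| denotes the Lebesgue measure of the support of a. -/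
open MeasureTheory Real Set
open scoped InnerProductSpace ENNReal NNReal

noncomputable section


lemma idw_open {E : Type*} [NormedAddCommGroup E] [NormedSpace ℝ E]
    {f : ℝ → E} {U : Set ℝ} (hU : IsOpen U) {x : ℝ} (hx : x ∈ U) (n : ℕ) :
    iteratedDerivWithin n f U x = iteratedDeriv n f x := by
  simp only [iteratedDerivWithin_eq_equiv_comp, iteratedDeriv_eq_equiv_comp,
    Function.comp_apply, iteratedFDerivWithin_of_isOpen n hU hx]

lemma leibniz_bound {U : Set ℝ} (hU : IsOpen U) {x : ℝ} (hx : x ∈ U) {f g : ℝ → ℂ}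
    (hf : ContDiffOn ℝ (⊤ : ℕ∞) f U) (hg : ContDiffOn ℝ (⊤ : ℕ∞) g U) (n : ℕ) :
    ‖iteratedDeriv n (fun y => f y * g y) x‖ ≤ ∑ i ∈ Finset.range (n + 1),
      (n.choose i : ℝ) * ‖iteratedDeriv i f x‖ * ‖iteratedDeriv (n - i) g x‖ := by
  rw [← idw_open hU hx n, ← norm_iteratedFDerivWithin_eq_norm_iteratedDerivWithin]
  refine (norm_iteratedFDerivWithin_mul_le hf hg hU.uniqueDiffOn hx (mod_cast le_top)).trans
    (le_of_eq ?_)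
  refine Finset.sum_congr rfl fun i _ => ?_
  rw [norm_iteratedFDerivWithin_eq_norm_iteratedDerivWithin,
    norm_iteratedFDerivWithin_eq_norm_iteratedDerivWithin, idw_open hU hx, idw_open hU hx]

lemma ofreal_norm_id {U : Set ℝ} (hU : IsOpen U) {x : ℝ} (hx : x ∈ U) {f : ℝ → ℝ}
    (hf : ContDiffOn ℝ (⊤ : ℕ∞) f U) (n : ℕ) :
    ‖iteratedDeriv n (fun y => ((f y : ℝ) : ℂ)) x‖ = ‖iteratedDeriv n f x‖ := by
  rw [← idw_open hU hx n, ← idw_open hU hx n,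
    ← norm_iteratedFDerivWithin_eq_norm_iteratedDerivWithin,
    ← norm_iteratedFDerivWithin_eq_norm_iteratedDerivWithin]
  exact Complex.ofRealLI.norm_iteratedFDerivWithin_comp_left (hf x hx) hU.uniqueDiffOn hx
    (mod_cast le_top)

lemma master_arith {x R : ℝ} (hx : x ≠ 0) (hR : R ≠ 0) (P Q : ℝ) (p q r t u v : ℕ) :
    (P * x ^ p / (R ^ r * x ^ u)) * (Q * x ^ q / (R ^ t * x ^ v)) =
      (P * Q) * x ^ (p + q) / (R ^ (r + t) * x ^ (u + v)) := by
  rw [pow_add, pow_add, pow_add]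
  field_simp

lemma reduce1_arith {x R : ℝ} (hx : x ≠ 0) (C : ℝ) (p u r : ℕ) :
    C * x ^ (p + 1) / (R ^ r * x ^ (u + 1)) = C * x ^ p / (R ^ r * x ^ u) := by
  rw [pow_succ, pow_succ, show R ^ r * (x ^ u * x) = R ^ r * x ^ u * x from by ring,
    show C * (x ^ p * x) = C * x ^ p * x from by ring,
    mul_div_mul_right _ _ hx]

lemma cBound (Cs : ℕ → ℝ) (hCs : ∀ j, 1 ≤ Cs j) : ∀ m : ℕ,
    ∃ A : ℝ, 1 ≤ A ∧
    ∀ (U : Set ℝ) (g : ℝ → ℝ) (R : ℝ), IsOpen U → ContDiffOn ℝ (⊤ : ℕ∞) g U →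
      (∀ x ∈ U, g x ≠ 0) → 1 ≤ R →
      ∀ s, s ∈ U →
      (∀ i : ℕ, 1 ≤ i → i ≤ m → |iteratedDeriv i g s| ≤ Cs (i+1) * |g s| ^ (i+1) / R ^ i) →
      ∀ k, k ≤ m →
        ‖iteratedDeriv k (fun x => ((g x : ℂ))⁻¹) s‖ ≤ A * |g s| ^ k / (R ^ k * |g s|) := by
  intro m
  induction m with
  | zero =>
    refine ⟨1, le_refl 1, fun U g R hU hg hne hR s hs _ k hk => ?_⟩
    interval_cases k
    simp [iteratedDeriv_zero]
  | succ m IH =>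
    obtain ⟨A, hA1, hA⟩ := IH
    set S : ℝ := ∑ j ∈ Finset.range (m+3), Cs j with hSdef
    have hS1 : (1:ℝ) ≤ S := by
      calc (1:ℝ) ≤ Cs 0 := hCs 0
      _ ≤ S := Finset.single_le_sum (fun j _ => le_trans zero_le_one (hCs j))
          (by simp : 0 ∈ Finset.range (m+3))
    have hSj : ∀ j, j ≤ m + 2 → Cs j ≤ S := fun j hj =>
      Finset.single_le_sum (fun j _ => le_trans zero_le_one (hCs j))
        (Finset.mem_range.2 (by omega))
    refine ⟨2^m * 2^m * S * A * A + A, ?_, ?_⟩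
    · have h0 : (0:ℝ) ≤ 2^m * 2^m * (∑ j ∈ Finset.range (m+3), Cs j) * A * A := by
        have : (0:ℝ) ≤ ∑ j ∈ Finset.range (m+3), Cs j := by
          exact Finset.sum_nonneg fun j _ => le_trans zero_le_one (hCs j)
        positivity
      linarith
    intro U g R hU hg hne hR s hs hyp k hk
    set A' : ℝ := 2^m * 2^m * S * A * A + A with hA'def
    have hApos : 0 < A := lt_of_lt_of_le zero_lt_one hA1
    have hgs : g s ≠ 0 := hne s hs
    have hgpos : 0 < |g s| := abs_pos.2 hgs
    have hRpos : 0 < R := lt_of_lt_of_le zero_lt_one hR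
    set c : ℝ → ℂ := fun x => ((g x : ℂ))⁻¹ with hcdef
    -- smoothness of c on U
    have hc : ContDiffOn ℝ (⊤ : ℕ∞) c U := by
      have h1 : ContDiffOn ℝ (⊤ : ℕ∞) (fun x => (g x)⁻¹) U := hg.inv hne
      have h2 := Complex.ofRealCLM.contDiff.comp_contDiffOn h1
      exact h2.congr fun x hx => by simp [hcdef]
    -- previous orders
    have hprev : ∀ k, k ≤ m → ‖iteratedDeriv k c s‖ ≤ A * |g s| ^ k / (R ^ k * |g s|) :=
      fun k hk => hA U g R hU hg hne hR s hs (fun i h1 h2 => hyp i h1 (by omega)) k hk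
    have hmono : ∀ k, k ≤ m → ‖iteratedDeriv k c s‖ ≤ A' * |g s| ^ k / (R ^ k * |g s|) := by
      intro k hk
      refine (hprev k hk).trans ?_
      gcongr
      have h0 : (0:ℝ) ≤ 2^m * 2^m * S * A * A := by
        have hSnn : (0:ℝ) ≤ S := le_trans zero_le_one hS1
        positivity
      linarith
    rcases Nat.lt_or_ge k (m+1) with hkm | hkm
    · exact hmono k (by omega)
    have hkeq : k = m + 1 := by omega
    subst hkeq
    -- bound on c * c
    have hcc : ∀ l, l ≤ m → ‖iteratedDeriv l (fun x => c x * c x) s‖ ≤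
        (2:ℝ)^l * (A * A) * |g s| ^ l / (R ^ l * |g s| ^ 2) := by
      intro l hl
      refine (leibniz_bound hU hs hc hc l).trans ?_
      have hterm : ∀ j ∈ Finset.range (l+1),
          (l.choose j : ℝ) * ‖iteratedDeriv j c s‖ * ‖iteratedDeriv (l-j) c s‖ ≤
          (l.choose j : ℝ) * ((A*A) * |g s| ^ l / (R ^ l * |g s| ^ 2)) := by
        intro j hj
        have hjl : j ≤ l := Finset.mem_range_succ_iff.mp hj
        have hjm : j ≤ m := le_trans hjl hl
        have h1 := hprev j hjm
        have h2 := hprev (l - j) (by omega)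
        have hmul : ‖iteratedDeriv j c s‖ * ‖iteratedDeriv (l-j) c s‖ ≤
            (A * |g s| ^ j / (R ^ j * |g s|)) * (A * |g s| ^ (l-j) / (R ^ (l-j) * |g s|)) := by
          gcongr <;> positivity
        have heq : (A * |g s| ^ j / (R ^ j * |g s|)) * (A * |g s| ^ (l-j) / (R ^ (l-j) * |g s|))
            = (A*A) * |g s| ^ l / (R ^ l * |g s| ^ 2) := by
          have := master_arith (ne_of_gt hgpos) (ne_of_gt hRpos) A A j (l-j) j (l-j) 1 1
          rw [show j + (l - j) = l from by omega] at this
          simpa [pow_one] using this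
        calc (l.choose j : ℝ) * ‖iteratedDeriv j c s‖ * ‖iteratedDeriv (l-j) c s‖
            = (l.choose j : ℝ) * (‖iteratedDeriv j c s‖ * ‖iteratedDeriv (l-j) c s‖) :=
              mul_assoc _ _ _
          _ ≤ _ := mul_le_mul_of_nonneg_left (hmul.trans (le_of_eq heq)) (by positivity)
      refine (Finset.sum_le_sum hterm).trans ?_
      rw [← Finset.sum_mul, ← Nat.cast_sum, Nat.sum_range_choose]
      rw [show ((2^l : ℕ) : ℝ) = (2:ℝ)^l from by push_cast; ring]
      rw [mul_div_assoc, mul_div_assoc, ← mul_assoc]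
    -- derivative of c on U
    have hdg : ContDiffOn ℝ (⊤ : ℕ∞) (deriv g) U := hg.deriv_of_isOpen hU (by
      exact_mod_cast le_top)
    have hEq : Set.EqOn (derivWithin c U)
        (fun x => ((deriv g x : ℝ) : ℂ) * (-(c x * c x))) U := by
      intro x hx
      have hgd : DifferentiableAt ℝ g x :=
        (hg.differentiableOn (by simp) x hx).differentiableAt (hU.mem_nhds hx)
      have h1 : HasDerivAt g (deriv g x) x := hgd.hasDerivAt
      have h2 : HasDerivAt (fun y => (g y)⁻¹) (-(deriv g x) / (g x)^2) x := h1.inv (hne x hx)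
      have h3 := h2.ofReal_comp
      have hfn : (fun y => (((g y)⁻¹ : ℝ) : ℂ)) = c := funext fun y => by
        simp [hcdef]
      rw [hfn] at h3
      rw [derivWithin_of_isOpen hU hx, h3.deriv]
      have hgx : (g x : ℂ) ≠ 0 := Complex.ofReal_ne_zero.2 (hne x hx)
      show ((-deriv g x / g x ^ 2 : ℝ) : ℂ) = _
      simp only [hcdef]
      push_cast
      rw [pow_two]
      ring
    -- main chain
    have hchain : iteratedDeriv (m+1) c s =
        iteratedDeriv m (fun x => ((deriv g x : ℝ) : ℂ) * (-(c x * c x))) s := by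
      rw [← idw_open hU hs (m+1), iteratedDerivWithin_succ',
        iteratedDerivWithin_congr hEq hs, idw_open hU hs m]
    rw [hchain]
    -- contdiff of the two factors
    have hd : ContDiffOn ℝ (⊤ : ℕ∞) (fun x => ((deriv g x : ℝ) : ℂ)) U := by
      have := Complex.ofRealCLM.contDiff.comp_contDiffOn hdg
      exact this.congr fun x hx => by simp
    have hcc2 : ContDiffOn ℝ (⊤ : ℕ∞) (fun x => -(c x * c x)) U := (hc.mul hc).neg
    refine (leibniz_bound hU hs hd hcc2 m).trans ?_
    have hterm : ∀ i ∈ Finset.range (m+1),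
        (m.choose i : ℝ) * ‖iteratedDeriv i (fun x => ((deriv g x : ℝ) : ℂ)) s‖ *
          ‖iteratedDeriv (m-i) (fun x => -(c x * c x)) s‖ ≤
        (m.choose i : ℝ) *
          ((2:ℝ)^m * (S * (A * A)) * |g s| ^ (m+1) / (R ^ (m+1) * |g s|)) := by
      intro i hi
      have him : i ≤ m := Finset.mem_range_succ_iff.mp hi
      -- first factor
      have hf1 : ‖iteratedDeriv i (fun x => ((deriv g x : ℝ) : ℂ)) s‖ ≤
          S * |g s| ^ (i+2) / (R ^ (i+1) * |g s| ^ 0) := by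
        rw [ofreal_norm_id hU hs hdg i]
        have : iteratedDeriv i (deriv g) s = iteratedDeriv (i+1) g s := by
          rw [iteratedDeriv_succ']
        rw [this, pow_zero, mul_one]
        calc ‖iteratedDeriv (i+1) g s‖ = |iteratedDeriv (i+1) g s| := rfl
          _ ≤ Cs (i+2) * |g s| ^ (i+2) / R ^ (i+1) := hyp (i+1) (by omega) (by omega)
          _ ≤ S * |g s| ^ (i+2) / R ^ (i+1) := by
              gcongr
              exact hSj (i+2) (by omega)
      -- second factor
      have hf2 : ‖iteratedDeriv (m-i) (fun x => -(c x * c x)) s‖ ≤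
          (2:ℝ)^m * (A * A) * |g s| ^ (m-i) / (R ^ (m-i) * |g s| ^ 2) := by
        have hneg : iteratedDeriv (m-i) (fun x => -(c x * c x)) s =
            -iteratedDeriv (m-i) (fun x => c x * c x) s := by
          rw [← idw_open hU hs (m-i), ← idw_open hU hs (m-i)]
          exact iteratedDerivWithin_neg (f := fun x => c x * c x)
        rw [hneg, norm_neg]
        refine (hcc (m-i) (Nat.sub_le m i)).trans ?_
        have h2 : (2:ℝ)^(m-i) ≤ (2:ℝ)^m := pow_le_pow_right₀ one_le_two (Nat.sub_le m i)
        gcongr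
      have hmul : ‖iteratedDeriv i (fun x => ((deriv g x : ℝ) : ℂ)) s‖ *
            ‖iteratedDeriv (m-i) (fun x => -(c x * c x)) s‖ ≤
          (S * |g s| ^ (i+2) / (R ^ (i+1) * |g s| ^ 0)) *
            ((2:ℝ)^m * (A * A) * |g s| ^ (m-i) / (R ^ (m-i) * |g s| ^ 2)) := by
        gcongr <;> positivity
      have heq : (S * |g s| ^ (i+2) / (R ^ (i+1) * |g s| ^ 0)) *
            ((2:ℝ)^m * (A * A) * |g s| ^ (m-i) / (R ^ (m-i) * |g s| ^ 2)) =
          (2:ℝ)^m * (S * (A * A)) * |g s| ^ (m+1) / (R ^ (m+1) * |g s|) := by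
        have h0 := master_arith (ne_of_gt hgpos) (ne_of_gt hRpos) S ((2:ℝ)^m * (A*A))
          (i+2) (m-i) (i+1) (m-i) 0 2
        rw [show i+2 + (m-i) = (m+1) + 1 from by omega,
          show i+1 + (m-i) = m+1 from by omega] at h0
        rw [h0, show (0:ℕ) + 2 = 1 + 1 from rfl, reduce1_arith (ne_of_gt hgpos),
          pow_one]
        ring_nf
      calc (m.choose i : ℝ) * ‖iteratedDeriv i (fun x => ((deriv g x : ℝ) : ℂ)) s‖ *
            ‖iteratedDeriv (m-i) (fun x => -(c x * c x)) s‖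
          = (m.choose i : ℝ) * (‖iteratedDeriv i (fun x => ((deriv g x : ℝ) : ℂ)) s‖ *
            ‖iteratedDeriv (m-i) (fun x => -(c x * c x)) s‖) := mul_assoc _ _ _
        _ ≤ _ := mul_le_mul_of_nonneg_left (hmul.trans (le_of_eq heq)) (by positivity)
    refine (Finset.sum_le_sum hterm).trans ?_
    rw [← Finset.sum_mul, ← Nat.cast_sum, Nat.sum_range_choose]
    rw [show ((2^m : ℕ) : ℝ) = (2:ℝ)^m from by push_cast; ring]
    have : (2:ℝ)^m * ((2:ℝ)^m * (S * (A * A)) * |g s| ^ (m+1) / (R ^ (m+1) * |g s|)) =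
        (2^m * 2^m * S * A * A) * |g s| ^ (m+1) / (R ^ (m+1) * |g s|) := by ring
    rw [this]
    have hC : (2:ℝ)^m*2^m*S*A*A ≤ A' := by simp only [hA'def]; linarith
    have hden : (0:ℝ) < R ^ (m+1) * |g s| := by positivity
    have hnum : (2:ℝ)^m*2^m*S*A*A * |g s| ^ (m+1) ≤ A' * |g s| ^ (m+1) := by
      have hpw : (0:ℝ) ≤ |g s| ^ (m+1) := by positivity
      exact mul_le_mul_of_nonneg_right hC hpw
    exact (div_le_div_iff_of_pos_right hden).mpr hnum


lemma Lstep_props {U : Set ℝ} (hU : IsOpen U) {c : ℝ → ℂ} (hc : ContDiffOn ℝ (⊤ : ℕ∞) c U)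
    {b : ℝ → ℂ} (hb : ContDiff ℝ (⊤ : ℕ∞) b) (hsupp : tsupport b ⊆ U) :
    ContDiff ℝ (⊤ : ℕ∞) (fun x => b x * c x) ∧
    ContDiff ℝ (⊤ : ℕ∞) (deriv (fun x => b x * c x)) ∧
    tsupport (deriv (fun x => b x * c x)) ⊆ tsupport b := by
  have hbc : ContDiff ℝ (⊤ : ℕ∞) (fun x => b x * c x) := by
    rw [← contDiffOn_univ]
    apply contDiffOn_of_locally_contDiffOn
    intro x _
    by_cases hx : x ∈ U
    · exact ⟨U, hU, hx,
        ((hb.contDiffOn).mono inter_subset_right).mul (hc.mono inter_subset_right)⟩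
    · refine ⟨(tsupport b)ᶜ, (isClosed_tsupport b).isOpen_compl,
        fun hmem => hx (hsupp hmem), ?_⟩
      exact (contDiffOn_const (c := (0:ℂ))).congr fun y hy => by
        simp [image_eq_zero_of_notMem_tsupport hy.2]
  have hzero : ∀ x, x ∉ tsupport b → deriv (fun y => b y * c y) x = 0 := by
    intro x hx
    have hev : (fun y => b y * c y) =ᶠ[nhds x] (fun _ => (0:ℂ)) := by
      filter_upwards [(isClosed_tsupport b).isOpen_compl.mem_nhds hx] with y hy
      simp [image_eq_zero_of_notMem_tsupport hy]
    rw [hev.deriv_eq]; exact deriv_const _ _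
  refine ⟨hbc, ?_, ?_⟩
  · exact (contDiff_infty_iff_deriv.1 (by exact_mod_cast hbc)).2
  · refine closure_minimal (fun x hx => ?_) (isClosed_tsupport b)
    by_contra hxx
    exact hx (hzero x hxx)

lemma cont_ephase {I : Set ℝ} (hI : IsOpen I) {φ : ℝ → ℝ} (hφc : ContinuousOn φ I)
    {h : ℝ → ℂ} (hh : Continuous h) (hsupp : tsupport h ⊆ I) :
    Continuous fun s => Complex.exp (Complex.I * (φ s : ℂ)) * h s := by
  rw [continuous_iff_continuousAt]; intro x
  by_cases hx : x ∈ I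
  · have h0 : ContinuousAt φ x := (hφc x hx).continuousAt (hI.mem_nhds hx)
    have h1 : ContinuousAt (fun s => Complex.exp (Complex.I * (φ s : ℂ))) x := by
      exact (continuousAt_const.mul (Complex.continuous_ofReal.continuousAt.comp h0)).cexp
    exact h1.mul hh.continuousAt
  · have hx' : x ∉ tsupport h := fun hmem => hx (hsupp hmem)
    have hev : (fun s => Complex.exp (Complex.I * (φ s : ℂ)) * h s) =ᶠ[nhds x]
        (fun _ => (0:ℂ)) := by
      filter_upwards [(isClosed_tsupport h).isOpen_compl.mem_nhds hx'] with y hy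
      simp [image_eq_zero_of_notMem_tsupport hy]
    exact (continuousAt_congr hev).2 continuousAt_const

lemma IBP {I U : Set ℝ} (hI : IsOpen I) (hU : IsOpen U) (hUI : U ⊆ I)
    {φ : ℝ → ℝ} (hφ : ContDiffOn ℝ (⊤ : ℕ∞) φ I) (hne : ∀ x ∈ U, deriv φ x ≠ 0)
    {b : ℝ → ℂ} (hb : ContDiff ℝ (⊤ : ℕ∞) b) (hbsupp : HasCompactSupport b)
    (hsupp : tsupport b ⊆ U) :
    ∫ s : ℝ, Complex.exp (Complex.I * (φ s : ℂ)) * b s =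
      Complex.I * ∫ s : ℝ, Complex.exp (Complex.I * (φ s : ℂ)) *
        (deriv (fun x => b x * (((deriv φ x : ℝ) : ℂ))⁻¹)) s := by
  set g : ℝ → ℝ := deriv φ with hgdef
  set c : ℝ → ℂ := fun x => ((g x : ℂ))⁻¹ with hcdef
  have hgI : ContDiffOn ℝ (⊤ : ℕ∞) g I := hφ.deriv_of_isOpen hI (by exact_mod_cast le_top)
  have hgU : ContDiffOn ℝ (⊤ : ℕ∞) g U := hgI.mono hUI
  have hc : ContDiffOn ℝ (⊤ : ℕ∞) c U := by
    have h1 : ContDiffOn ℝ (⊤ : ℕ∞) (fun x => (g x)⁻¹) U := hgU.inv hne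
    exact (Complex.ofRealCLM.contDiff.comp_contDiffOn h1).congr fun x hx => by
      simp [hcdef]
  obtain ⟨hbc, hLb, hLsupp⟩ := Lstep_props hU hc hb hsupp
  set Lb : ℝ → ℂ := deriv (fun x => b x * c x) with hLbdef
  set e : ℝ → ℂ := fun s => Complex.exp (Complex.I * (φ s : ℂ)) with hedef
  set F : ℝ → ℂ := fun s => e s * (b s * c s) with hFdef
  set G : ℝ → ℂ := fun s => Complex.I * e s * b s + e s * Lb s with hGdef
  have key : ∀ x, HasDerivAt F (G x) x := by
    intro x
    by_cases hx : x ∈ U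
    · have hφd : HasDerivAt φ (deriv φ x) x :=
        ((hφ.differentiableOn (by simp) x (hUI hx)).differentiableAt
          (hI.mem_nhds (hUI hx))).hasDerivAt
      have h1 : HasDerivAt (fun s => ((φ s : ℂ))) (((deriv φ x : ℝ) : ℂ)) x := hφd.ofReal_comp
      have h2 : HasDerivAt (fun s => Complex.I * (φ s : ℂ))
          (Complex.I * ((deriv φ x : ℝ) : ℂ)) x := h1.const_mul Complex.I
      have hphase : HasDerivAt e (Complex.exp (Complex.I * (φ x : ℂ)) *
          (Complex.I * ((deriv φ x : ℝ) : ℂ))) x := h2.cexp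
      have hbcd : HasDerivAt (fun y => b y * c y) (Lb x) x :=
        ((hbc.differentiable (by simp)) x).hasDerivAt
      have hmul := hphase.mul hbcd
      have hgx : (g x : ℂ) ≠ 0 := Complex.ofReal_ne_zero.2 (hne x hx)
      have hcg : (g x : ℂ) * c x = 1 := mul_inv_cancel₀ hgx
      convert hmul using 1
      show Complex.I * e x * b x + e x * Lb x = _
      have hval : Complex.exp (Complex.I * (φ x : ℂ)) * (Complex.I * ((deriv φ x : ℝ) : ℂ)) *
          (b x * c x) = Complex.I * e x * b x * ((g x : ℂ) * c x) := by
        simp only [hedef, hgdef]; ring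
      rw [hval, hcg, mul_one]
      rfl
      rfl
    · have hx' : x ∉ tsupport b := fun h => hx (hsupp h)
      have hbx : b x = 0 := image_eq_zero_of_notMem_tsupport hx'
      have hLx : Lb x = 0 :=
        image_eq_zero_of_notMem_tsupport (fun h => hx' (hLsupp h))
      have hev : F =ᶠ[nhds x] (fun _ => (0:ℂ)) := by
        filter_upwards [(isClosed_tsupport b).isOpen_compl.mem_nhds hx'] with y hy
        simp [hFdef, image_eq_zero_of_notMem_tsupport hy]
      have h0 : HasDerivAt F 0 x := (hasDerivAt_const x (0:ℂ)).congr_of_eventuallyEq hev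
      have : G x = 0 := by simp [hGdef, hbx, hLx]
      rw [this]; exact h0
  -- continuity and integrability
  have hsuppI : tsupport b ⊆ I := hsupp.trans hUI
  have heb_cont : Continuous fun s => e s * b s :=
    cont_ephase hI hφ.continuousOn hb.continuous hsuppI
  have hLb_suppI : tsupport Lb ⊆ I := hLsupp.trans hsuppI
  have heLb_cont : Continuous fun s => e s * Lb s :=
    cont_ephase hI hφ.continuousOn hLb.continuous hLb_suppI
  have hLb_cs : HasCompactSupport Lb :=
    IsCompact.of_isClosed_subset hbsupp (isClosed_tsupport _) hLsupp
  have heb_cs : HasCompactSupport fun s => e s * b s := hbsupp.mul_left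
  have heLb_cs : HasCompactSupport fun s => e s * Lb s := hLb_cs.mul_left
  have heb_int : Integrable fun s => e s * b s := heb_cont.integrable_of_hasCompactSupport heb_cs
  have heLb_int : Integrable fun s => e s * Lb s :=
    heLb_cont.integrable_of_hasCompactSupport heLb_cs
  -- ∫ G = 0
  have hKb : IsCompact (tsupport b) := hbsupp
  obtain ⟨u, v, huv⟩ : ∃ u v : ℝ, tsupport b ⊆ Icc u v :=
    bddBelow_bddAbove_iff_subset_Icc.1 ⟨hKb.bddBelow, hKb.bddAbove⟩
  have hGzero : ∀ x, x ∉ tsupport b → G x = 0 := by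
    intro x hx
    have hbx : b x = 0 := image_eq_zero_of_notMem_tsupport hx
    have hLx : Lb x = 0 := image_eq_zero_of_notMem_tsupport (fun h => hx (hLsupp h))
    simp [hGdef, hbx, hLx]
  have hGsupp : Function.support G ⊆ Ioc (u-1) (v+1) := by
    intro x hx
    by_contra hmem
    rcases Classical.em (x ∈ tsupport b) with hin | hout
    · have := huv hin
      simp only [mem_Icc] at this
      simp only [mem_Ioc, not_and_or, not_lt, not_le] at hmem
      rcases hmem with h | h <;> linarith [this.1, this.2]
    · exact hx (hGzero x hout)
  have hGcont : Continuous G := by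
    have h1 : Continuous fun s => Complex.I * (e s * b s) := continuous_const.mul heb_cont
    exact (h1.add heLb_cont).congr fun s => by simp only [hGdef, Pi.add_apply]; ring
  have h1 : ∫ x in (u-1)..(v+1), G x = ∫ x : ℝ, G x :=
    intervalIntegral.integral_eq_integral_of_support_subset hGsupp
  have h2 : ∫ x in (u-1)..(v+1), G x = F (v+1) - F (u-1) := by
    apply intervalIntegral.integral_eq_sub_of_hasDerivAt (fun x _ => key x)
    exact (hGcont.intervalIntegrable _ _)
  have hFu : F (u-1) = 0 := by
    have : u - 1 ∉ tsupport b := fun h => by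
      have := (huv h).1; linarith
    simp [hFdef, image_eq_zero_of_notMem_tsupport this]
  have hFv : F (v+1) = 0 := by
    have : v + 1 ∉ tsupport b := fun h => by
      have := (huv h).2; linarith
    simp [hFdef, image_eq_zero_of_notMem_tsupport this]
  have hG0 : ∫ x : ℝ, G x = 0 := by rw [← h1, h2, hFu, hFv, sub_zero]
  have hsplit : ∫ x : ℝ, G x =
      Complex.I * (∫ s : ℝ, e s * b s) + ∫ s : ℝ, e s * Lb s := by
    rw [hGdef]
    rw [integral_add ((heb_int.const_mul Complex.I).congr ?_) heLb_int]
    · congr 1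
      · rw [← integral_const_mul]
        congr 1; funext s; ring
    · filter_upwards with s
      ring
  have hkey : Complex.I * (∫ s : ℝ, e s * b s) + (∫ s : ℝ, e s * Lb s) = 0 := by
    rw [← hsplit]; exact hG0
  have : (∫ s : ℝ, e s * b s) = Complex.I * ∫ s : ℝ, e s * Lb s := by
    have hI2 : Complex.I * Complex.I = -1 := Complex.I_mul_I
    linear_combination (-Complex.I) * hkey + (∫ s : ℝ, e s * b s) * hI2
  exact this

theorem statement17
    (N : ℕ) (Cs : ℕ → ℝ) (hCs : ∀ j, 1 ≤ Cs j) :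
    ∃ CN : ℝ, 0 < CN ∧
      ∀ α β : ℝ, ∀ a : ℝ → ℂ, ∀ φ : ℝ → ℝ,
        ContDiff ℝ (⊤ : ℕ∞) a → HasCompactSupport a → tsupport a ⊆ Set.Ioo α β →
        ContDiffOn ℝ (⊤ : ℕ∞) φ (Set.Ioo α β) →
        ∀ R : ℝ, 1 ≤ R →
        (∀ s ∈ tsupport a, iteratedDerivWithin 1 φ (Set.Ioo α β) s ≠ 0) →
        (∀ s ∈ tsupport a, ∀ j : ℕ, 2 ≤ j → j ≤ N + 1 →
          |iteratedDerivWithin j φ (Set.Ioo α β) s|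
            ≤ Cs j * |iteratedDerivWithin 1 φ (Set.Ioo α β) s| ^ j / R ^ (j - 1)) →
        (∀ s ∈ tsupport a, ∀ j : ℕ, j ≤ N + 1 →
          ‖iteratedDeriv j a s‖
            ≤ Cs j * |iteratedDerivWithin 1 φ (Set.Ioo α β) s| ^ j / R ^ j) →
        ‖∫ s : ℝ, Complex.exp (Complex.I * (φ s : ℂ)) * a s‖
          ≤ CN * (volume (tsupport a)).toReal * R ^ (-(N : ℝ)) := by
  obtain ⟨A, hA1, hA⟩ := cBound Cs hCs N
  set S : ℝ := ∑ j ∈ Finset.range (N+2), Cs j with hSdef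
  have hCs0 : ∀ j, 0 ≤ Cs j := fun j => le_trans zero_le_one (hCs j)
  have hS1 : (1:ℝ) ≤ S :=
    le_trans (hCs 0) (Finset.single_le_sum (fun j _ => hCs0 j) (by simp))
  have hSj : ∀ j, j ≤ N + 1 → Cs j ≤ S := fun j hj =>
    Finset.single_le_sum (fun j _ => hCs0 j) (Finset.mem_range.2 (by omega))
  have hq1 : (1:ℝ) ≤ 2^(N+1) * A := by
    have h2 : (1:ℝ) ≤ 2^(N+1) := one_le_pow₀ one_le_two
    nlinarith
  set B : ℝ := S * (2^(N+1) * A)^N with hBdef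
  have hB1 : (1:ℝ) ≤ B := by
    have := one_le_pow₀ hq1 (n := N)
    nlinarith
  refine ⟨B, lt_of_lt_of_le zero_lt_one hB1, ?_⟩
  intro α β a φ ha hacomp hsuppI hφ R hR hne1 hphi hja
  have hRpos : (0:ℝ) < R := lt_of_lt_of_le one_pos hR
  set g : ℝ → ℝ := deriv φ with hgdef
  have hIopen : IsOpen (Set.Ioo α β) := isOpen_Ioo
  have hgI : ContDiffOn ℝ (⊤:ℕ∞) g (Set.Ioo α β) :=
    hφ.deriv_of_isOpen hIopen (by exact_mod_cast le_top)
  set U : Set ℝ := (Set.Ioo α β) ∩ g ⁻¹' ({0}ᶜ) with hUdef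
  have hUopen : IsOpen U :=
    hgI.continuousOn.isOpen_inter_preimage hIopen isOpen_compl_singleton
  have hUI : U ⊆ Set.Ioo α β := inter_subset_left
  have hgne : ∀ x ∈ U, g x ≠ 0 := fun x hx => hx.2
  have hder1 : ∀ s ∈ tsupport a, iteratedDerivWithin 1 φ (Set.Ioo α β) s = g s := by
    intro s hs
    rw [idw_open hIopen (hsuppI hs) 1, iteratedDeriv_one]
  have hKU : tsupport a ⊆ U := by
    intro s hs
    refine ⟨hsuppI hs, ?_⟩
    simp only [mem_preimage, mem_compl_iff, mem_singleton_iff]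
    have := hne1 s hs
    rwa [hder1 s hs] at this
  have hgU : ContDiffOn ℝ (⊤:ℕ∞) g U := hgI.mono hUI
  have hghyp : ∀ s ∈ tsupport a, ∀ i : ℕ, 1 ≤ i → i ≤ N →
      |iteratedDeriv i g s| ≤ Cs (i+1) * |g s| ^ (i+1) / R ^ i := by
    intro s hs i h1 h2
    have h3 := hphi s hs (i+1) (by omega) (by omega)
    rw [hder1 s hs] at h3
    have heq : iteratedDerivWithin (i+1) φ (Set.Ioo α β) s = iteratedDeriv i g s := by
      rw [idw_open hIopen (hsuppI hs) (i+1), iteratedDeriv_succ', hgdef]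
    rw [heq] at h3
    simpa using h3
  set c : ℝ → ℂ := fun x => ((g x : ℂ))⁻¹ with hcdef
  have hc : ContDiffOn ℝ (⊤:ℕ∞) c U := by
    have h1 : ContDiffOn ℝ (⊤ : ℕ∞) (fun x => (g x)⁻¹) U := hgU.inv hgne
    exact (Complex.ofRealCLM.contDiff.comp_contDiffOn h1).congr fun x hx => by
      simp [hcdef]
  have hcB : ∀ s ∈ tsupport a, ∀ k, k ≤ N →
      ‖iteratedDeriv k c s‖ ≤ A * |g s|^k / (R^k * |g s|) :=
    fun s hs k hk => hA U g R hUopen hgU hgne hR s (hKU hs)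
      (fun i hi1 hi2 => hghyp s hs i hi1 hi2) k hk
  set T : (ℝ → ℂ) → (ℝ → ℂ) := fun b => deriv (fun x => b x * c x) with hTdef
  have hIter : ∀ k : ℕ, ContDiff ℝ (⊤:ℕ∞) (T^[k] a) ∧ tsupport (T^[k] a) ⊆ tsupport a := by
    intro k; induction k with
    | zero =>
      simp only [Function.iterate_zero_apply]
      exact ⟨ha, subset_rfl⟩
    | succ k ih =>
      obtain ⟨h1, h2⟩ := ih
      obtain ⟨_, h3, h4⟩ := Lstep_props hUopen hc h1 (h2.trans hKU)
      rw [Function.iterate_succ_apply']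
      exact ⟨h3, h4.trans h2⟩
  have hBound : ∀ k : ℕ, k ≤ N → ∀ j : ℕ, j ≤ N - k → ∀ s ∈ tsupport a,
      ‖iteratedDeriv j (T^[k] a) s‖ ≤ (S * (2^(N+1) * A)^k) * |g s| ^ j / R ^ (k + j) := by
    intro k
    induction k with
    | zero =>
      intro _ j hj s hs
      have h1 := hja s hs j (by omega)
      rw [hder1 s hs] at h1
      simp only [Function.iterate_zero_apply, pow_zero, mul_one, zero_add]
      refine h1.trans ?_
      gcongr
      exact hSj j (by omega)
    | succ k ih =>
      intro hk1 j hj s hs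
      have hkN : k ≤ N := by omega
      have hs' : s ∈ U := hKU hs
      have hgpos : 0 < |g s| := abs_pos.2 (hgne s hs')
      rw [Function.iterate_succ_apply']
      have hrw : iteratedDeriv j (T (T^[k] a)) s =
          iteratedDeriv (j+1) (fun x => (T^[k] a) x * c x) s := by
        rw [iteratedDeriv_succ']
      rw [hrw]
      have hbU : ContDiffOn ℝ (⊤:ℕ∞) (T^[k] a) U := (hIter k).1.contDiffOn
      refine (leibniz_bound hUopen hs' hbU hc (j+1)).trans ?_
      have hterm : ∀ i ∈ Finset.range (j+2),
          ((j+1).choose i : ℝ) * ‖iteratedDeriv i (T^[k] a) s‖ *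
            ‖iteratedDeriv (j+1-i) c s‖ ≤
          ((j+1).choose i : ℝ) *
            ((S * (2^(N+1) * A)^k * A) * |g s| ^ j / R ^ ((k+1) + j)) := by
        intro i hi
        have hij : i ≤ j + 1 := Finset.mem_range_succ_iff.mp hi
        have hb1 : ‖iteratedDeriv i (T^[k] a) s‖ ≤
            (S * (2^(N+1) * A)^k) * |g s| ^ i / (R ^ (k+i) * |g s| ^ 0) := by
          rw [pow_zero, mul_one]
          exact ih hkN i (by omega) s hs
        have hc1 : ‖iteratedDeriv (j+1-i) c s‖ ≤
            A * |g s| ^ (j+1-i) / (R ^ (j+1-i) * |g s| ^ 1) := by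
          rw [pow_one]
          exact hcB s hs (j+1-i) (by omega)
        have hmul : ‖iteratedDeriv i (T^[k] a) s‖ * ‖iteratedDeriv (j+1-i) c s‖ ≤
            ((S * (2^(N+1) * A)^k) * |g s| ^ i / (R ^ (k+i) * |g s| ^ 0)) *
              (A * |g s| ^ (j+1-i) / (R ^ (j+1-i) * |g s| ^ 1)) := by
          gcongr <;> positivity
        have heq : ((S * (2^(N+1) * A)^k) * |g s| ^ i / (R ^ (k+i) * |g s| ^ 0)) *
              (A * |g s| ^ (j+1-i) / (R ^ (j+1-i) * |g s| ^ 1)) =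
            (S * (2^(N+1) * A)^k * A) * |g s| ^ j / R ^ ((k+1) + j) := by
          have h0 := master_arith (ne_of_gt hgpos) (ne_of_gt hRpos)
            (S * (2^(N+1) * A)^k) A i (j+1-i) (k+i) (j+1-i) 0 1
          rw [show i + (j+1-i) = j + 1 from by omega,
            show (k+i) + (j+1-i) = ((k+1)+j) from by omega] at h0
          rw [h0, show (0:ℕ) + 1 = 0 + 1 from rfl, reduce1_arith (ne_of_gt hgpos),
            pow_zero, mul_one]
        calc ((j+1).choose i : ℝ) * ‖iteratedDeriv i (T^[k] a) s‖ *
              ‖iteratedDeriv (j+1-i) c s‖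
            = ((j+1).choose i : ℝ) * (‖iteratedDeriv i (T^[k] a) s‖ *
              ‖iteratedDeriv (j+1-i) c s‖) := mul_assoc _ _ _
          _ ≤ _ := mul_le_mul_of_nonneg_left (hmul.trans (le_of_eq heq)) (by positivity)
      refine (Finset.sum_le_sum hterm).trans ?_
      rw [← Finset.sum_mul, ← Nat.cast_sum, Nat.sum_range_choose]
      have hj2 : ((2^(j+1) : ℕ) : ℝ) ≤ (2:ℝ)^(N+1) := by
        rw [show ((2^(j+1) : ℕ) : ℝ) = (2:ℝ)^(j+1) from by push_cast; ring]
        exact pow_le_pow_right₀ one_le_two (by omega)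
      have hXnn : (0:ℝ) ≤ (S * (2^(N+1) * A)^k * A) * |g s| ^ j / R ^ ((k+1) + j) := by
        have hSnn : (0:ℝ) ≤ S := le_trans zero_le_one hS1
        have hAnn : (0:ℝ) ≤ A := le_trans zero_le_one hA1
        positivity
      refine (mul_le_mul_of_nonneg_right hj2 hXnn).trans (le_of_eq ?_)
      rw [pow_succ]
      ring
  -- chain of integrals
  have hacomp' : ∀ k, HasCompactSupport (T^[k] a) := fun k =>
    IsCompact.of_isClosed_subset hacomp (isClosed_tsupport _) (hIter k).2
  have hnormEq : ∀ k : ℕ, ‖∫ s : ℝ, Complex.exp (Complex.I * (φ s:ℂ)) * a s‖ =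
      ‖∫ s : ℝ, Complex.exp (Complex.I * (φ s:ℂ)) * (T^[k] a) s‖ := by
    intro k; induction k with
    | zero => simp
    | succ k ih =>
      rw [ih]
      have hIBP := IBP hIopen hUopen hUI hφ hgne (hIter k).1 (hacomp' k)
        ((hIter k).2.trans hKU)
      have hTT : (deriv (fun x => (T^[k] a) x * (((deriv φ x : ℝ) : ℂ))⁻¹)) =
          T^[k+1] a := by
        rw [Function.iterate_succ_apply']
      rw [hTT] at hIBP
      rw [hIBP, norm_mul, Complex.norm_I, one_mul]
  -- final estimate
  have hzero : ∀ s, s ∉ tsupport a →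
      Complex.exp (Complex.I * (φ s:ℂ)) * (T^[N] a) s = 0 := by
    intro s hs
    have : (T^[N] a) s = 0 :=
      image_eq_zero_of_notMem_tsupport (fun h => hs ((hIter N).2 h))
    simp [this]
  have hptw : ∀ s ∈ tsupport a,
      ‖Complex.exp (Complex.I * (φ s:ℂ)) * (T^[N] a) s‖ ≤ B / R^N := by
    intro s hs
    rw [norm_mul]
    have h1 : ‖Complex.exp (Complex.I * (φ s:ℂ))‖ = 1 := by
      rw [mul_comm]; exact Complex.norm_exp_ofReal_mul_I _
    rw [h1, one_mul]
    have h2 := hBound N le_rfl 0 (by omega) s hs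
    simpa [hBdef] using h2
  have hKmeas : MeasurableSet (tsupport a) := (isClosed_tsupport a).measurableSet
  have hKvol : volume (tsupport a) < ⊤ := hacomp.measure_lt_top
  calc ‖∫ s : ℝ, Complex.exp (Complex.I * (φ s:ℂ)) * a s‖
      = ‖∫ s in tsupport a, Complex.exp (Complex.I * (φ s:ℂ)) * (T^[N] a) s‖ := by
        rw [hnormEq N, setIntegral_eq_integral_of_forall_compl_eq_zero hzero]
    _ ≤ (B / R^N) * (volume (tsupport a)).toReal :=
        norm_setIntegral_le_of_norm_le_const hKvol hptw
    _ = B * (volume (tsupport a)).toReal * R ^ (-(N : ℝ)) := by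
        rw [Real.rpow_neg (le_of_lt hRpos), Real.rpow_natCast]
        ring
end
end

section
/- For every j ∈ ℕ and every C ≥ 1 there exists a constant C' > 0, depending only on j and C, with the following property. Let Ω, I ⊆ ℝ be open intervals, G : Ω × I → ℂ smooth with ∂_y G nonvanishing on Ω × I, and y : Ω → I smooth with G(x, y(x)) = 0 for all x ∈ Ω. Suppose A, M₁, M₂ > 0 are such that |∂_y G(x, y(x))| ≥ A M₂ for all x ∈ Ω, and |∂_x^{α₁} ∂_y^{α₂} G(x, y(x))| ≤ C A M₁^{α₁} M₂^{α₂} for all x ∈ Ω and all (α₁, α₂) ∈ ℕ₀² ∖ {(0,0)}. Then |y^{(j)}(x)| ≤ C' M₁^{j} M₂^{−1} for all x ∈ Ω. Moreover, for every N ∈ ℕ there is C'' > 0 depending only on N and C such that if additionally H : Ω × I → ℂ is smooth and B > 0 satisfies |∂_x^{α₁} ∂_y^{α₂} H(x, y(x))| ≤ C B M₁^{α₁} M₂^{α₂} for all x ∈ Ω and all (α₁, α₂) ∈ ℕ₀² ∖ {(0,0)}, then |(d/dx)^N [H(x, y(x))]| ≤ C'' B M₁^{N} for all x ∈ Ω.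 -/
open MeasureTheory Real Set
open scoped InnerProductSpace ENNReal NNReal

noncomputable section

/-- The mixed partial derivative `∂_x^{a₁} ∂_y^{a₂} F` of a function on `ℝ × ℝ`,
realized as iterated line derivatives in the coordinate directions. -/
def mixedPartial (a₁ a₂ : ℕ) (F : ℝ × ℝ → ℂ) : ℝ × ℝ → ℂ :=
  (List.replicate a₁ ((1 : ℝ), (0 : ℝ)) ++ List.replicate a₂ ((0 : ℝ), (1 : ℝ))).foldr
    (fun w g => fun q => lineDeriv ℝ g q w) F

def pd (v : ℝ × ℝ) (f : ℝ × ℝ → ℂ) : ℝ × ℝ → ℂ := fun q => fderiv ℝ f q v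
def mpF (a₁ a₂ : ℕ) (f : ℝ × ℝ → ℂ) : ℝ × ℝ → ℂ :=
  (pd (1, 0))^[a₁] ((pd (0, 1))^[a₂] f)

lemma mixedPartial_succ_x (a₁ a₂ : ℕ) (F : ℝ × ℝ → ℂ) :
    mixedPartial (a₁ + 1) a₂ F = fun q => lineDeriv ℝ (mixedPartial a₁ a₂ F) q (1, 0) := by
  simp [mixedPartial, List.replicate_succ]

lemma mixedPartial_zero_succ_y (a₂ : ℕ) (F : ℝ × ℝ → ℂ) :
    mixedPartial 0 (a₂ + 1) F = fun q => lineDeriv ℝ (mixedPartial 0 a₂ F) q (0, 1) := by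
  simp [mixedPartial, List.replicate_succ]

lemma mixedPartial_zero_zero (F : ℝ × ℝ → ℂ) : mixedPartial 0 0 F = F := rfl

variable {U : Set (ℝ × ℝ)} {f g : ℝ × ℝ → ℂ} {v w : ℝ × ℝ}

lemma pd_congr (hU : IsOpen U) (h : Set.EqOn f g U) (v : ℝ × ℝ) :
    Set.EqOn (pd v f) (pd v g) U := by
  intro q hq
  have : f =ᶠ[nhds q] g := Filter.eventuallyEq_of_mem (hU.mem_nhds hq) h
  simp only [pd, this.fderiv_eq]

lemma pd_iter_congr (hU : IsOpen U) (h : Set.EqOn f g U) (v : ℝ × ℝ) (n : ℕ) :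
    Set.EqOn ((pd v)^[n] f) ((pd v)^[n] g) U := by
  induction n generalizing f g with
  | zero => exact h
  | succ n ih =>
    rw [Function.iterate_succ_apply, Function.iterate_succ_apply]
    exact ih (pd_congr hU h v)

lemma pd_contDiffOn (hU : IsOpen U) (hf : ContDiffOn ℝ (⊤:ℕ∞) f U) (v : ℝ × ℝ) :
    ContDiffOn ℝ (⊤:ℕ∞) (pd v f) U := by
  have h := hf.fderiv_of_isOpen (m := (⊤:ℕ∞)) hU (by simp)
  exact (ContinuousLinearMap.apply ℝ ℂ v).contDiff.comp_contDiffOn h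

lemma pd_iter_contDiffOn (hU : IsOpen U) (hf : ContDiffOn ℝ (⊤:ℕ∞) f U) (v : ℝ × ℝ) (n : ℕ) :
    ContDiffOn ℝ (⊤:ℕ∞) ((pd v)^[n] f) U := by
  induction n generalizing f with
  | zero => exact hf
  | succ n ih =>
    rw [Function.iterate_succ_apply]
    exact ih (pd_contDiffOn hU hf v)

lemma mpF_contDiffOn (hU : IsOpen U) (hf : ContDiffOn ℝ (⊤:ℕ∞) f U) (a₁ a₂ : ℕ) :
    ContDiffOn ℝ (⊤:ℕ∞) (mpF a₁ a₂ f) U :=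
  pd_iter_contDiffOn hU (pd_iter_contDiffOn hU hf _ _) _ _

lemma lineDeriv_eqOn_pd (hU : IsOpen U) (hf : ContDiffOn ℝ (⊤:ℕ∞) f U) (v : ℝ × ℝ) :
    Set.EqOn (fun q => lineDeriv ℝ f q v) (pd v f) U := by
  intro q hq
  have hd : DifferentiableAt ℝ f q :=
    (hf.contDiffAt (hU.mem_nhds hq)).differentiableAt (by simp)
  exact hd.lineDeriv_eq_fderiv

lemma pd_pd_comm (hU : IsOpen U) (hf : ContDiffOn ℝ (⊤:ℕ∞) f U) {q : ℝ × ℝ} (hq : q ∈ U)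
    (v w : ℝ × ℝ) : pd v (pd w f) q = pd w (pd v f) q := by
  have hca : ContDiffAt ℝ (⊤:ℕ∞) f q := hf.contDiffAt (hU.mem_nhds hq)
  have hsym : IsSymmSndFDerivAt ℝ f q := hca.isSymmSndFDerivAt (by simp; exact WithTop.coe_le_coe.2 le_top)
  have hd : DifferentiableAt ℝ (fderiv ℝ f) q := by
    have : ContDiffAt ℝ 1 (fderiv ℝ f) q := hca.fderiv_right (m := 1) (by decide)
    exact this.differentiableAt one_ne_zero
  have key : ∀ a b : ℝ × ℝ, pd a (pd b f) q = fderiv ℝ (fderiv ℝ f) q a b := by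
    intro a b
    have h2 : fderiv ℝ (pd b f) q =
        (fderiv ℝ f q).comp (fderiv ℝ (fun _ : ℝ × ℝ => b) q) +
          (fderiv ℝ (fderiv ℝ f) q).flip b := fderiv_clm_apply hd (differentiableAt_const b)
    simp only [pd]
    rw [h2]
    simp [fderiv_const]
  rw [key v w, key w v]
  exact hsym.eq v w

lemma pd_comm_iter (hU : IsOpen U) (hf : ContDiffOn ℝ (⊤:ℕ∞) f U) (v w : ℝ × ℝ) (a : ℕ) :
    Set.EqOn (pd v ((pd w)^[a] f)) ((pd w)^[a] (pd v f)) U := by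
  induction a generalizing f with
  | zero => exact fun q _ => rfl
  | succ a ih =>
    intro q hq
    rw [Function.iterate_succ_apply', Function.iterate_succ_apply']
    have h1 : pd v (pd w ((pd w)^[a] f)) q = pd w (pd v ((pd w)^[a] f)) q :=
      pd_pd_comm hU (pd_iter_contDiffOn hU hf w a) hq v w
    rw [h1]
    exact pd_congr hU (ih hf) w hq

lemma mixedPartial_eqOn_mpF (hU : IsOpen U) (hf : ContDiffOn ℝ (⊤:ℕ∞) f U) (a₁ a₂ : ℕ) :
    Set.EqOn (mixedPartial a₁ a₂ f) (mpF a₁ a₂ f) U := by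
  induction a₁ generalizing a₂ with
  | zero =>
    induction a₂ with
    | zero => exact fun q _ => rfl
    | succ a₂ ih =>
      intro q hq
      rw [mixedPartial_zero_succ_y]
      have h1 : lineDeriv ℝ (mixedPartial 0 a₂ f) q (0,1)
          = lineDeriv ℝ (mpF 0 a₂ f) q (0,1) := by
        have : mixedPartial 0 a₂ f =ᶠ[nhds q] mpF 0 a₂ f :=
          Filter.eventuallyEq_of_mem (hU.mem_nhds hq) ih
        exact this.lineDeriv_eq
      have h2 := lineDeriv_eqOn_pd hU (mpF_contDiffOn hU hf 0 a₂) (0,1) hq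
      show lineDeriv ℝ (mixedPartial 0 a₂ f) q (0,1) = mpF 0 (a₂+1) f q
      rw [h1]
      rw [show mpF 0 (a₂+1) f = pd (0,1) (mpF 0 a₂ f) by
        simp only [mpF, Function.iterate_zero_apply, Function.iterate_succ_apply']]
      exact h2
  | succ a₁ ih =>
    intro q hq
    rw [mixedPartial_succ_x]
    have h1 : lineDeriv ℝ (mixedPartial a₁ a₂ f) q (1,0)
        = lineDeriv ℝ (mpF a₁ a₂ f) q (1,0) := by
      have : mixedPartial a₁ a₂ f =ᶠ[nhds q] mpF a₁ a₂ f :=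
        Filter.eventuallyEq_of_mem (hU.mem_nhds hq) (ih a₂)
      exact this.lineDeriv_eq
    have h2 := lineDeriv_eqOn_pd hU (mpF_contDiffOn hU hf a₁ a₂) (1,0) hq
    show lineDeriv ℝ (mixedPartial a₁ a₂ f) q (1,0) = mpF (a₁+1) a₂ f q
    rw [h1]
    rw [show mpF (a₁+1) a₂ f = pd (1,0) (mpF a₁ a₂ f) by
      simp only [mpF, Function.iterate_succ_apply']]
    exact h2

lemma mpF_pd_x (hU : IsOpen U) (hf : ContDiffOn ℝ (⊤:ℕ∞) f U) (a₁ a₂ : ℕ) :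
    Set.EqOn (mpF a₁ a₂ (pd (1,0) f)) (mpF (a₁+1) a₂ f) U := by
  have base : Set.EqOn ((pd (0,1))^[a₂] (pd (1,0) f)) (pd (1,0) ((pd (0,1))^[a₂] f)) U :=
    fun q hq => (pd_comm_iter hU hf (1,0) (0,1) a₂ hq).symm
  have : Set.EqOn ((pd (1,0))^[a₁] ((pd (0,1))^[a₂] (pd (1,0) f)))
      ((pd (1,0))^[a₁] (pd (1,0) ((pd (0,1))^[a₂] f))) U :=
    pd_iter_congr hU base (1,0) a₁
  intro q hq
  have h2 := this hq
  simp only [mpF]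
  rw [show (pd (1,0))^[a₁+1] ((pd (0,1))^[a₂] f)
      = (pd (1,0))^[a₁] (pd (1,0) ((pd (0,1))^[a₂] f)) from Function.iterate_succ_apply _ _ _]
  exact h2

lemma mpF_pd_y (a₁ a₂ : ℕ) : mpF a₁ a₂ (pd (0,1) f) = mpF a₁ (a₂+1) f := by
  simp only [mpF, Function.iterate_succ_apply]

end

noncomputable section

structure Ctx (C : ℝ) where
  Ω : Set ℝ
  I : Set ℝ
  hΩ : IsOpen Ω
  hI : IsOpen I
  G : ℝ × ℝ → ℂ
  hG : ContDiffOn ℝ (⊤:ℕ∞) G (Ω ×ˢ I)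
  y : ℝ → ℝ
  hy : ContDiffOn ℝ (⊤:ℕ∞) y Ω
  hmap : ∀ x ∈ Ω, y x ∈ I
  hzero : ∀ x ∈ Ω, G (x, y x) = 0
  A : ℝ
  M₁ : ℝ
  M₂ : ℝ
  hA : 0 < A
  hM₁ : 0 < M₁
  hM₂ : 0 < M₂
  hlow : ∀ x ∈ Ω, A * M₂ ≤ ‖mixedPartial 0 1 G (x, y x)‖
  hupp : ∀ x ∈ Ω, ∀ α₁ α₂ : ℕ, (α₁, α₂) ≠ (0, 0) →
    ‖mixedPartial α₁ α₂ G (x, y x)‖ ≤ C * A * M₁ ^ α₁ * M₂ ^ α₂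

namespace Ctx

variable {C : ℝ} (X : Ctx C)

def U : Set (ℝ × ℝ) := X.Ω ×ˢ X.I

def u : ℝ → ℝ × ℝ := fun t => (t, X.y t)

def ψ : ℝ → ℂ := fun t => (pd (0,1) X.G (X.u t))⁻¹

lemma hUo : IsOpen X.U := X.hΩ.prod X.hI

lemma hUDO : UniqueDiffOn ℝ X.Ω := X.hΩ.uniqueDiffOn

lemma humem {x : ℝ} (hx : x ∈ X.Ω) : X.u x ∈ X.U := ⟨hx, X.hmap x hx⟩

lemma hu_smooth : ContDiffOn ℝ (⊤:ℕ∞) X.u X.Ω := contDiffOn_id.prodMk X.hy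

lemma humaps : Set.MapsTo X.u X.Ω X.U := fun _ hx => X.humem hx

lemma comp_smooth {H : ℝ × ℝ → ℂ} (hH : ContDiffOn ℝ (⊤:ℕ∞) H X.U) :
    ContDiffOn ℝ (⊤:ℕ∞) (fun t => H (X.u t)) X.Ω := hH.comp X.hu_smooth X.humaps

/-- bounds on nonzero-order mixed partials along the graph -/
def FB' (B : ℝ) (H : ℝ × ℝ → ℂ) : Prop :=
  ∀ x ∈ X.Ω, ∀ α₁ α₂ : ℕ, (α₁, α₂) ≠ (0, 0) →
    ‖mixedPartial α₁ α₂ H (X.u x)‖ ≤ C * B * X.M₁ ^ α₁ * X.M₂ ^ α₂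

/-- full bounds, in `mpF` form -/
def PB (B : ℝ) (H : ℝ × ℝ → ℂ) : Prop :=
  ∀ x ∈ X.Ω, ∀ α₁ α₂ : ℕ, ‖mpF α₁ α₂ H (X.u x)‖ ≤ C * B * X.M₁ ^ α₁ * X.M₂ ^ α₂

lemma PB.toFB' {B : ℝ} {H : ℝ × ℝ → ℂ} (hH : ContDiffOn ℝ (⊤:ℕ∞) H X.U)
    (h : X.PB B H) : X.FB' B H := by
  intro x hx α₁ α₂ _
  rw [mixedPartial_eqOn_mpF X.hUo hH α₁ α₂ (X.humem hx)]
  exact h x hx α₁ α₂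

lemma FB'_G : X.FB' X.A X.G := fun x hx => X.hupp x hx

lemma PB_pd_x {B : ℝ} {H : ℝ × ℝ → ℂ} (hH : ContDiffOn ℝ (⊤:ℕ∞) H X.U)
    (h : X.FB' B H) : X.PB (B * X.M₁) (pd (1,0) H) := by
  intro x hx α₁ α₂
  rw [mpF_pd_x X.hUo hH α₁ α₂ (X.humem hx),
    ← mixedPartial_eqOn_mpF X.hUo hH (α₁+1) α₂ (X.humem hx)]
  have := h x hx (α₁+1) α₂ (by simp)
  calc ‖mixedPartial (α₁+1) α₂ H (X.u x)‖ ≤ C * B * X.M₁ ^ (α₁+1) * X.M₂ ^ α₂ := this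
    _ = C * (B * X.M₁) * X.M₁ ^ α₁ * X.M₂ ^ α₂ := by ring

lemma PB_pd_y {B : ℝ} {H : ℝ × ℝ → ℂ} (hH : ContDiffOn ℝ (⊤:ℕ∞) H X.U)
    (h : X.FB' B H) : X.PB (B * X.M₂) (pd (0,1) H) := by
  intro x hx α₁ α₂
  rw [mpF_pd_y α₁ α₂,
    ← mixedPartial_eqOn_mpF X.hUo hH α₁ (α₂+1) (X.humem hx)]
  have := h x hx α₁ (α₂+1) (by simp)
  calc ‖mixedPartial α₁ (α₂+1) H (X.u x)‖ ≤ C * B * X.M₁ ^ α₁ * X.M₂ ^ (α₂+1) := this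
    _ = C * (B * X.M₂) * X.M₁ ^ α₁ * X.M₂ ^ α₂ := by ring

lemma Gy_ne {x : ℝ} (hx : x ∈ X.Ω) : pd (0,1) X.G (X.u x) ≠ 0 := by
  have h := X.hlow x hx
  have h2 : mixedPartial 0 1 X.G (X.u x) = mpF 0 1 X.G (X.u x) :=
    mixedPartial_eqOn_mpF X.hUo X.hG 0 1 (X.humem hx)
  have h3 : mpF 0 1 X.G = pd (0,1) X.G := by
    simp [mpF]
  intro hzero
  rw [show ((x : ℝ), X.y x) = X.u x from rfl, h2, h3, hzero] at h
  simp at h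
  nlinarith [X.hA, X.hM₂, mul_pos X.hA X.hM₂]

lemma Gy_lower {x : ℝ} (hx : x ∈ X.Ω) : X.A * X.M₂ ≤ ‖pd (0,1) X.G (X.u x)‖ := by
  have h := X.hlow x hx
  have h2 : mixedPartial 0 1 X.G (X.u x) = mpF 0 1 X.G (X.u x) :=
    mixedPartial_eqOn_mpF X.hUo X.hG 0 1 (X.humem hx)
  have h3 : mpF 0 1 X.G = pd (0,1) X.G := by simp [mpF]
  rwa [show ((x : ℝ), X.y x) = X.u x from rfl, h2, h3] at h

lemma psi_smooth : ContDiffOn ℝ (⊤:ℕ∞) X.ψ X.Ω :=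
  (X.comp_smooth (pd_contDiffOn X.hUo X.hG (0,1))).inv (fun x hx => X.Gy_ne hx)

/-- chain rule -/
lemma hasDerivWithinAt_comp {H : ℝ × ℝ → ℂ} (hH : ContDiffOn ℝ (⊤:ℕ∞) H X.U)
    {x : ℝ} (hx : x ∈ X.Ω) :
    HasDerivWithinAt (fun t => H (X.u t))
      (pd (1,0) H (X.u x) + (derivWithin X.y X.Ω x) • pd (0,1) H (X.u x)) X.Ω x := by
  have hyd : DifferentiableWithinAt ℝ X.y X.Ω x :=
    (X.hy.differentiableOn (by simp)) x hx
  have hy' : HasDerivWithinAt X.y (derivWithin X.y X.Ω x) X.Ω x := hyd.hasDerivWithinAt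
  have hu : HasDerivWithinAt X.u (1, derivWithin X.y X.Ω x) X.Ω x :=
    (hasDerivWithinAt_id x X.Ω).prodMk hy'
  have hHd : DifferentiableAt ℝ H (X.u x) :=
    ((hH.contDiffAt (X.hUo.mem_nhds (X.humem hx))).differentiableAt
      (by simp))
  have hcomp := hHd.hasFDerivAt.comp_hasDerivWithinAt x hu
  have hvec : ((1 : ℝ), derivWithin X.y X.Ω x)
      = ((1:ℝ),(0:ℝ)) + (derivWithin X.y X.Ω x) • ((0:ℝ),(1:ℝ)) := by
    simp [Prod.ext_iff]
  rw [hvec] at hcomp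
  rw [map_add, _root_.map_smul] at hcomp
  exact hcomp

end Ctx

/-- Leibniz-type norm bound for iterated derivatives within of a product. -/
lemma normDW_mul {s : Set ℝ} (hs : UniqueDiffOn ℝ s) {f g : ℝ → ℂ}
    (hf : ContDiffOn ℝ (⊤:ℕ∞) f s) (hg : ContDiffOn ℝ (⊤:ℕ∞) g s)
    {x : ℝ} (hx : x ∈ s) (n : ℕ) :
    ‖iteratedDerivWithin n (fun t => f t * g t) s x‖ ≤
      ∑ i ∈ Finset.range (n + 1), (n.choose i : ℝ) *
        ‖iteratedDerivWithin i f s x‖ * ‖iteratedDerivWithin (n - i) g s x‖ := by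
  have h := norm_iteratedFDerivWithin_mul_le (𝕜 := ℝ) (N := ((⊤:ℕ∞) : WithTop ℕ∞))
    hf hg hs hx (n := n) (by exact_mod_cast OrderTop.le_top _)
  simpa only [norm_iteratedFDerivWithin_eq_norm_iteratedDerivWithin] using h

lemma normDW_ofReal {s : Set ℝ} (hs : UniqueDiffOn ℝ s) {f : ℝ → ℝ}
    (hf : ContDiffOn ℝ (⊤:ℕ∞) f s) {x : ℝ} (hx : x ∈ s) (n : ℕ) :
    ‖iteratedDerivWithin n (fun t => ((f t : ℝ) : ℂ)) s x‖ =
      |iteratedDerivWithin n f s x| := by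
  have h := Complex.ofRealLI.norm_iteratedFDerivWithin_comp_left (f := f)
    (hf.of_le (by exact_mod_cast OrderTop.le_top _ : ((n:ℕ∞):WithTop ℕ∞) ≤ _) x hx) hs hx le_rfl
  rw [norm_iteratedFDerivWithin_eq_norm_iteratedDerivWithin,
    norm_iteratedFDerivWithin_eq_norm_iteratedDerivWithin] at h
  simpa [Real.norm_eq_abs, Function.comp_def] using h

lemma sum_choose_bound {n : ℕ} {a b : ℕ → ℝ} {P Q M : ℝ} (hM : 0 ≤ M) (hP : 0 ≤ P)
    (ha0 : ∀ i, 0 ≤ a i) (hb0 : ∀ i, 0 ≤ b i)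
    (ha : ∀ i, i ≤ n → a i ≤ P * M ^ i) (hb : ∀ i, i ≤ n → b i ≤ Q * M ^ i) :
    ∑ i ∈ Finset.range (n + 1), (n.choose i : ℝ) * a i * b (n - i) ≤
      2 ^ n * (P * Q * M ^ n) := by
  have key : ∀ i ∈ Finset.range (n + 1),
      (n.choose i : ℝ) * a i * b (n - i) ≤ (n.choose i : ℝ) * (P * Q * M ^ n) := by
    intro i hi
    have hin : i ≤ n := Nat.lt_succ_iff.mp (Finset.mem_range.mp hi)
    have h1 : a i * b (n - i) ≤ (P * M ^ i) * (Q * M ^ (n - i)) := by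
      apply mul_le_mul (ha i hin) (hb (n - i) (Nat.sub_le n i)) (hb0 _)
      positivity
    have h2 : (P * M ^ i) * (Q * M ^ (n - i)) = P * Q * M ^ n := by
      rw [show P * M ^ i * (Q * M ^ (n - i)) = P * Q * (M ^ i * M ^ (n - i)) by ring,
        ← pow_add, Nat.add_sub_cancel' hin]
    rw [mul_assoc]
    have := mul_le_mul_of_nonneg_left (h1.trans h2.le) (by positivity : (0:ℝ) ≤ (n.choose i : ℝ))
    linarith
  calc ∑ i ∈ Finset.range (n + 1), (n.choose i : ℝ) * a i * b (n - i)
      ≤ ∑ i ∈ Finset.range (n + 1), (n.choose i : ℝ) * (P * Q * M ^ n) :=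
        Finset.sum_le_sum key
    _ = (∑ i ∈ Finset.range (n + 1), (n.choose i : ℝ)) * (P * Q * M ^ n) := by
        rw [Finset.sum_mul]
    _ = 2 ^ n * (P * Q * M ^ n) := by
        norm_cast
        rw [Nat.sum_range_choose]

namespace Ctx

variable {C : ℝ} (X : Ctx C)

/-- `derivWithin` of a composition along the graph, as an exact formula on `Ω`. -/
lemma derivWithin_comp_eq {H : ℝ × ℝ → ℂ} (hH : ContDiffOn ℝ (⊤:ℕ∞) H X.U)
    {x : ℝ} (hx : x ∈ X.Ω) :
    derivWithin (fun t => H (X.u t)) X.Ω x =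
      pd (1,0) H (X.u x) + ((derivWithin X.y X.Ω x : ℝ) : ℂ) * pd (0,1) H (X.u x) := by
  have h := (X.hasDerivWithinAt_comp hH hx).derivWithin (X.hUDO x hx)
  rw [h, Complex.real_smul]

/-- the first derivative of `y`, expressed via `G`. -/
lemma y'_eq {x : ℝ} (hx : x ∈ X.Ω) :
    ((derivWithin X.y X.Ω x : ℝ) : ℂ) = -(pd (1,0) X.G (X.u x)) * X.ψ x := by
  have h0 : derivWithin (fun t => X.G (X.u t)) X.Ω x = 0 := by
    have heq : Set.EqOn (fun t => X.G (X.u t)) (fun _ => (0:ℂ)) X.Ω := fun t ht => X.hzero t ht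
    rw [derivWithin_congr heq (X.hzero x hx)]
    simp
  have h := X.derivWithin_comp_eq X.hG hx
  rw [h0] at h
  have hne := X.Gy_ne hx
  have h1 : ((derivWithin X.y X.Ω x : ℝ) : ℂ) * pd (0,1) X.G (X.u x)
      = -(pd (1,0) X.G (X.u x)) := by linear_combination -h
  show _ = -(pd (1,0) X.G (X.u x)) * (pd (0,1) X.G (X.u x))⁻¹
  field_simp
  linear_combination h1

end Ctx

namespace Ctx

variable {C : ℝ} (X : Ctx C)

lemma g_smooth : ContDiffOn ℝ (⊤:ℕ∞) (fun t => pd (0,1) X.G (X.u t)) X.Ω :=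
  X.comp_smooth (pd_contDiffOn X.hUo X.hG (0,1))

lemma psi_deriv {x : ℝ} (hx : x ∈ X.Ω) :
    derivWithin X.ψ X.Ω x =
      (-(derivWithin (fun t => pd (0,1) X.G (X.u t)) X.Ω x) * X.ψ x) * X.ψ x := by
  set g : ℝ → ℂ := fun t => pd (0,1) X.G (X.u t) with hg
  have hgd : HasDerivWithinAt g (derivWithin g X.Ω x) X.Ω x :=
    ((X.g_smooth.differentiableOn (by simp)) x hx).hasDerivWithinAt
  have hne : g x ≠ 0 := X.Gy_ne hx
  have h0 := (hasDerivWithinAt_const x X.Ω (1:ℂ)).div hgd hne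
  have h1 : HasDerivWithinAt (fun t => (g t)⁻¹)
      ((0 * g x - 1 * derivWithin g X.Ω x) / g x ^ 2) X.Ω x := by
    have e : (fun t => (g t)⁻¹) = (fun _ => (1:ℂ)) / g := by ext t; simp
    rw [e]; exact h0
  have h := h1.derivWithin (X.hUDO x hx)
  have hpsig : X.ψ = fun t => (g t)⁻¹ := rfl
  rw [hpsig, h]
  field_simp
  ring

end Ctx

lemma prod_bound {s : Set ℝ} (hs : UniqueDiffOn ℝ s) {f g : ℝ → ℂ}
    (hf : ContDiffOn ℝ (⊤:ℕ∞) f s) (hg : ContDiffOn ℝ (⊤:ℕ∞) g s) {x : ℝ} (hx : x ∈ s)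
    (n : ℕ) {P Q M : ℝ} (hM : 0 ≤ M) (hP : 0 ≤ P)
    (hfb : ∀ i, i ≤ n → ‖iteratedDerivWithin i f s x‖ ≤ P * M ^ i)
    (hgb : ∀ i, i ≤ n → ‖iteratedDerivWithin i g s x‖ ≤ Q * M ^ i) :
    ‖iteratedDerivWithin n (fun t => f t * g t) s x‖ ≤ 2 ^ n * (P * Q * M ^ n) :=
  (normDW_mul hs hf hg hx n).trans
    (sum_choose_bound hM hP (fun _ => norm_nonneg _) (fun _ => norm_nonneg _) hfb hgb)

namespace Ctx

variable {C : ℝ} (X : Ctx C)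


/-- bounds on `D^i (∂_x H ∘ u)` for `H` with graph bounds. -/
lemma pdx_comp_bounds (hC : 1 ≤ C) (n : ℕ) (c : ℝ) (hc : 1 ≤ c)
    (ihH : ∀ k, 1 ≤ k → k ≤ n → ∀ B : ℝ, 0 ≤ B → ∀ H : ℝ × ℝ → ℂ,
      ContDiffOn ℝ (⊤:ℕ∞) H X.U → X.FB' B H →
      ∀ x ∈ X.Ω, ‖iteratedDerivWithin k (fun t => H (X.u t)) X.Ω x‖ ≤ c * B * X.M₁ ^ k)
    {B : ℝ} (hB : 0 ≤ B) {H : ℝ × ℝ → ℂ} (hH : ContDiffOn ℝ (⊤:ℕ∞) H X.U)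
    (hFB : X.FB' B H) {x : ℝ} (hx : x ∈ X.Ω) :
    ∀ i, i ≤ n → ‖iteratedDerivWithin i (fun t => pd (1,0) H (X.u t)) X.Ω x‖ ≤
      (c * C * (B * X.M₁)) * X.M₁ ^ i := by
  have hHxs : ContDiffOn ℝ (⊤:ℕ∞) (pd (1,0) H) X.U := pd_contDiffOn X.hUo hH (1,0)
  have hPB : X.PB (B * X.M₁) (pd (1,0) H) := X.PB_pd_x hH hFB
  have hBM : 0 ≤ B * X.M₁ := mul_nonneg hB X.hM₁.le
  intro i hi
  rcases Nat.eq_zero_or_pos i with rfl | hi1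
  · rw [iteratedDerivWithin_zero]
    have h0 := hPB x hx 0 0
    simp only [pow_zero, mul_one] at h0 ⊢
    calc ‖pd (1,0) H (X.u x)‖ = ‖mpF 0 0 (pd (1,0) H) (X.u x)‖ := rfl
      _ ≤ C * (B * X.M₁) := h0
      _ = 1 * (C * (B * X.M₁)) := by ring
      _ ≤ c * (C * (B * X.M₁)) := by
          refine mul_le_mul_of_nonneg_right hc ?_
          exact mul_nonneg (by linarith) hBM
      _ = c * C * (B * X.M₁) := by ring
  · have h := ihH i hi1 hi (B * X.M₁) hBM (pd (1,0) H) hHxs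
      (Ctx.PB.toFB' X hHxs hPB) x hx
    calc ‖iteratedDerivWithin i (fun t => pd (1,0) H (X.u t)) X.Ω x‖
        ≤ c * (B * X.M₁) * X.M₁ ^ i := h
      _ = (c * (B * X.M₁) * X.M₁ ^ i) * 1 := by ring
      _ ≤ (c * (B * X.M₁) * X.M₁ ^ i) * C := by
          refine mul_le_mul_of_nonneg_left hC ?_
          exact mul_nonneg (mul_nonneg (by linarith) hBM) (pow_pos X.hM₁ i).le
      _ = c * C * (B * X.M₁) * X.M₁ ^ i := by ring

/-- bounds on `D^i (∂_y H ∘ u)` for `H` with graph bounds. -/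
lemma pdy_comp_bounds (hC : 1 ≤ C) (n : ℕ) (c : ℝ) (hc : 1 ≤ c)
    (ihH : ∀ k, 1 ≤ k → k ≤ n → ∀ B : ℝ, 0 ≤ B → ∀ H : ℝ × ℝ → ℂ,
      ContDiffOn ℝ (⊤:ℕ∞) H X.U → X.FB' B H →
      ∀ x ∈ X.Ω, ‖iteratedDerivWithin k (fun t => H (X.u t)) X.Ω x‖ ≤ c * B * X.M₁ ^ k)
    {B : ℝ} (hB : 0 ≤ B) {H : ℝ × ℝ → ℂ} (hH : ContDiffOn ℝ (⊤:ℕ∞) H X.U)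
    (hFB : X.FB' B H) {x : ℝ} (hx : x ∈ X.Ω) :
    ∀ i, i ≤ n → ‖iteratedDerivWithin i (fun t => pd (0,1) H (X.u t)) X.Ω x‖ ≤
      (c * C * (B * X.M₂)) * X.M₁ ^ i := by
  have hHys : ContDiffOn ℝ (⊤:ℕ∞) (pd (0,1) H) X.U := pd_contDiffOn X.hUo hH (0,1)
  have hPB : X.PB (B * X.M₂) (pd (0,1) H) := X.PB_pd_y hH hFB
  have hBM : 0 ≤ B * X.M₂ := mul_nonneg hB X.hM₂.le
  intro i hi
  rcases Nat.eq_zero_or_pos i with rfl | hi1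
  · rw [iteratedDerivWithin_zero]
    have h0 := hPB x hx 0 0
    simp only [pow_zero, mul_one] at h0 ⊢
    calc ‖pd (0,1) H (X.u x)‖ = ‖mpF 0 0 (pd (0,1) H) (X.u x)‖ := rfl
      _ ≤ C * (B * X.M₂) := h0
      _ = 1 * (C * (B * X.M₂)) := by ring
      _ ≤ c * (C * (B * X.M₂)) := by
          refine mul_le_mul_of_nonneg_right hc ?_
          exact mul_nonneg (by linarith) hBM
      _ = c * C * (B * X.M₂) := by ring
  · have h := ihH i hi1 hi (B * X.M₂) hBM (pd (0,1) H) hHys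
      (Ctx.PB.toFB' X hHys hPB) x hx
    calc ‖iteratedDerivWithin i (fun t => pd (0,1) H (X.u t)) X.Ω x‖
        ≤ c * (B * X.M₂) * X.M₁ ^ i := h
      _ = (c * (B * X.M₂) * X.M₁ ^ i) * 1 := by ring
      _ ≤ (c * (B * X.M₂) * X.M₁ ^ i) * C := by
          refine mul_le_mul_of_nonneg_left hC ?_
          exact mul_nonneg (mul_nonneg (by linarith) hBM) (pow_pos X.hM₁ i).le
      _ = c * C * (B * X.M₂) * X.M₁ ^ i := by ring

/-- bounds on `D^i (∂_x G ∘ u)`, combining the zero-order bound with the inductive one. -/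
lemma Gx_comp_bounds (hC : 1 ≤ C) (n : ℕ) (c : ℝ) (hc : 1 ≤ c)
    (ihH : ∀ k, 1 ≤ k → k ≤ n → ∀ B : ℝ, 0 ≤ B → ∀ H : ℝ × ℝ → ℂ,
      ContDiffOn ℝ (⊤:ℕ∞) H X.U → X.FB' B H →
      ∀ x ∈ X.Ω, ‖iteratedDerivWithin k (fun t => H (X.u t)) X.Ω x‖ ≤ c * B * X.M₁ ^ k)
    {x : ℝ} (hx : x ∈ X.Ω) :
    ∀ i, i ≤ n → ‖iteratedDerivWithin i (fun t => pd (1,0) X.G (X.u t)) X.Ω x‖ ≤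
      (c * C * (X.A * X.M₁)) * X.M₁ ^ i := by
  have hGxs : ContDiffOn ℝ (⊤:ℕ∞) (pd (1,0) X.G) X.U := pd_contDiffOn X.hUo X.hG (1,0)
  have hPB : X.PB (X.A * X.M₁) (pd (1,0) X.G) := X.PB_pd_x X.hG X.FB'_G
  have hAM : 0 < X.A * X.M₁ := mul_pos X.hA X.hM₁
  intro i hi
  rcases Nat.eq_zero_or_pos i with rfl | hi1
  · rw [iteratedDerivWithin_zero]
    have h0 := hPB x hx 0 0
    simp only [pow_zero, mul_one] at h0 ⊢
    calc ‖pd (1,0) X.G (X.u x)‖ = ‖mpF 0 0 (pd (1,0) X.G) (X.u x)‖ := rfl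
      _ ≤ C * (X.A * X.M₁) := h0
      _ = 1 * (C * (X.A * X.M₁)) := by ring
      _ ≤ c * (C * (X.A * X.M₁)) := by
          refine mul_le_mul_of_nonneg_right hc ?_
          exact (mul_pos (lt_of_lt_of_le one_pos hC) hAM).le
      _ = c * C * (X.A * X.M₁) := by ring
  · have h := ihH i hi1 hi (X.A * X.M₁) hAM.le (pd (1,0) X.G) hGxs
      (Ctx.PB.toFB' X hGxs hPB) x hx
    calc ‖iteratedDerivWithin i (fun t => pd (1,0) X.G (X.u t)) X.Ω x‖
        ≤ c * (X.A * X.M₁) * X.M₁ ^ i := h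
      _ = (c * (X.A * X.M₁) * X.M₁ ^ i) * 1 := by ring
      _ ≤ (c * (X.A * X.M₁) * X.M₁ ^ i) * C := by
          refine mul_le_mul_of_nonneg_left hC ?_
          exact (mul_pos (mul_pos (lt_of_lt_of_le one_pos hc) hAM) (pow_pos X.hM₁ i)).le
      _ = c * C * (X.A * X.M₁) * X.M₁ ^ i := by ring

lemma step_y (hC : 1 ≤ C) (n : ℕ) (c : ℝ) (hc : 1 ≤ c)
    (ihH : ∀ k, 1 ≤ k → k ≤ n → ∀ B : ℝ, 0 ≤ B → ∀ H : ℝ × ℝ → ℂ,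
      ContDiffOn ℝ (⊤:ℕ∞) H X.U → X.FB' B H →
      ∀ x ∈ X.Ω, ‖iteratedDerivWithin k (fun t => H (X.u t)) X.Ω x‖ ≤ c * B * X.M₁ ^ k)
    (ihψ : ∀ k, k ≤ n → ∀ x ∈ X.Ω,
      ‖iteratedDerivWithin k X.ψ X.Ω x‖ ≤ c * X.M₁ ^ k / (X.A * X.M₂)) :
    ∀ x ∈ X.Ω, |iteratedDerivWithin (n+1) X.y X.Ω x| ≤
      (2 ^ n * c ^ 2 * C) * X.M₁ ^ (n+1) / X.M₂ := by
  intro x hx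
  have hy' : ContDiffOn ℝ (⊤:ℕ∞) (derivWithin X.y X.Ω) X.Ω :=
    X.hy.derivWithin (m := (⊤:ℕ∞)) X.hUDO (by simp)
  rw [iteratedDerivWithin_succ', ← normDW_ofReal X.hUDO hy' hx n]
  have heq : Set.EqOn (fun t => ((derivWithin X.y X.Ω t : ℝ) : ℂ))
      (fun t => (-(pd (1,0) X.G (X.u t))) * X.ψ t) X.Ω := by
    intro t ht
    simpa using X.y'_eq ht
  rw [iteratedDerivWithin_congr heq hx]
  have hnegs : ContDiffOn ℝ (⊤:ℕ∞) (fun t => -(pd (1,0) X.G (X.u t))) X.Ω :=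
    (X.comp_smooth (pd_contDiffOn X.hUo X.hG (1,0))).neg
  have hb := prod_bound X.hUDO hnegs X.psi_smooth hx n (M := X.M₁)
    (P := c * C * (X.A * X.M₁)) (Q := c / (X.A * X.M₂)) X.hM₁.le
    (mul_pos (mul_pos (lt_of_lt_of_le one_pos hc) (lt_of_lt_of_le one_pos hC))
      (mul_pos X.hA X.hM₁)).le
    (fun i hi => by
      rw [show (fun t => -(pd (1,0) X.G (X.u t))) = (fun t => -((fun t' => pd (1,0) X.G (X.u t')) t)) from rfl,
        iteratedDerivWithin_fun_neg _, norm_neg]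
      exact X.Gx_comp_bounds hC n c hc ihH hx i hi)
    (fun i hi => by
      have := ihψ i hi x hx
      calc ‖iteratedDerivWithin i X.ψ X.Ω x‖ ≤ c * X.M₁ ^ i / (X.A * X.M₂) := this
        _ = c / (X.A * X.M₂) * X.M₁ ^ i := by ring)
  calc ‖iteratedDerivWithin n (fun t => (-(pd (1,0) X.G (X.u t))) * X.ψ t) X.Ω x‖
      ≤ 2 ^ n * ((c * C * (X.A * X.M₁)) * (c / (X.A * X.M₂)) * X.M₁ ^ n) := hb
    _ = (2 ^ n * c ^ 2 * C) * X.M₁ ^ (n+1) / X.M₂ := by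
        field_simp [X.hA.ne', X.hM₂.ne']
        ring

end Ctx

namespace Ctx

variable {C : ℝ} (X : Ctx C)

lemma y'_ofReal_smooth : ContDiffOn ℝ (⊤:ℕ∞)
    (fun t => ((derivWithin X.y X.Ω t : ℝ) : ℂ)) X.Ω :=
  Complex.ofRealCLM.contDiff.comp_contDiffOn
    (X.hy.derivWithin (m := (⊤:ℕ∞)) X.hUDO (by simp))

lemma y'_comp_bounds (n : ℕ) (cy : ℝ)
    (ihy : ∀ k, 1 ≤ k → k ≤ n + 1 → ∀ x ∈ X.Ω,
      |iteratedDerivWithin k X.y X.Ω x| ≤ cy * X.M₁ ^ k / X.M₂)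
    {x : ℝ} (hx : x ∈ X.Ω) :
    ∀ i, i ≤ n → ‖iteratedDerivWithin i
        (fun t => ((derivWithin X.y X.Ω t : ℝ) : ℂ)) X.Ω x‖ ≤
      (cy * X.M₁ / X.M₂) * X.M₁ ^ i := by
  have hy' : ContDiffOn ℝ (⊤:ℕ∞) (derivWithin X.y X.Ω) X.Ω :=
    X.hy.derivWithin (m := (⊤:ℕ∞)) X.hUDO (by simp)
  intro i hi
  rw [normDW_ofReal X.hUDO hy' hx i, ← iteratedDerivWithin_succ']
  calc |iteratedDerivWithin (i+1) X.y X.Ω x| ≤ cy * X.M₁ ^ (i+1) / X.M₂ :=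
      ihy (i+1) (by omega) (by omega) x hx
    _ = (cy * X.M₁ / X.M₂) * X.M₁ ^ i := by rw [pow_succ]; ring

lemma step_H (hC : 1 ≤ C) (n : ℕ) (c cy : ℝ) (hc : 1 ≤ c) (hcy : 0 ≤ cy)
    (ihH : ∀ k, 1 ≤ k → k ≤ n → ∀ B : ℝ, 0 ≤ B → ∀ H : ℝ × ℝ → ℂ,
      ContDiffOn ℝ (⊤:ℕ∞) H X.U → X.FB' B H →
      ∀ x ∈ X.Ω, ‖iteratedDerivWithin k (fun t => H (X.u t)) X.Ω x‖ ≤ c * B * X.M₁ ^ k)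
    (ihy : ∀ k, 1 ≤ k → k ≤ n + 1 → ∀ x ∈ X.Ω,
      |iteratedDerivWithin k X.y X.Ω x| ≤ cy * X.M₁ ^ k / X.M₂) :
    ∀ B : ℝ, 0 ≤ B → ∀ H : ℝ × ℝ → ℂ, ContDiffOn ℝ (⊤:ℕ∞) H X.U → X.FB' B H →
      ∀ x ∈ X.Ω, ‖iteratedDerivWithin (n+1) (fun t => H (X.u t)) X.Ω x‖ ≤
        (c * C + 2 ^ n * cy * c * C) * B * X.M₁ ^ (n+1) := by
  intro B hB H hH hFB x hx
  rw [iteratedDerivWithin_succ']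
  set f₁ : ℝ → ℂ := fun t => pd (1,0) H (X.u t) with hf₁
  set f₂ : ℝ → ℂ := fun t => ((derivWithin X.y X.Ω t : ℝ) : ℂ) * pd (0,1) H (X.u t) with hf₂
  have heq : Set.EqOn (derivWithin (fun t => H (X.u t)) X.Ω) (f₁ + f₂) X.Ω := by
    intro t ht
    exact X.derivWithin_comp_eq hH ht
  rw [iteratedDerivWithin_congr heq hx]
  have hf₁s : ContDiffOn ℝ (⊤:ℕ∞) f₁ X.Ω := X.comp_smooth (pd_contDiffOn X.hUo hH (1,0))
  have hf₂s : ContDiffOn ℝ (⊤:ℕ∞) f₂ X.Ω :=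
    X.y'_ofReal_smooth.mul (X.comp_smooth (pd_contDiffOn X.hUo hH (0,1)))
  rw [iteratedDerivWithin_add hx X.hUDO
    (hf₁s.of_le (by exact_mod_cast OrderTop.le_top _) x hx)
    (hf₂s.of_le (by exact_mod_cast OrderTop.le_top _) x hx)]
  have h1 : ‖iteratedDerivWithin n f₁ X.Ω x‖ ≤ c * C * B * X.M₁ ^ (n+1) := by
    calc ‖iteratedDerivWithin n f₁ X.Ω x‖ ≤ (c * C * (B * X.M₁)) * X.M₁ ^ n :=
        X.pdx_comp_bounds hC n c hc ihH hB hH hFB hx n le_rfl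
      _ = c * C * B * X.M₁ ^ (n+1) := by rw [pow_succ]; ring
  have h2 : ‖iteratedDerivWithin n f₂ X.Ω x‖ ≤ 2 ^ n * cy * c * C * B * X.M₁ ^ (n+1) := by
    have hb := prod_bound X.hUDO X.y'_ofReal_smooth
      (X.comp_smooth (pd_contDiffOn X.hUo hH (0,1))) hx n (M := X.M₁)
      (P := cy * X.M₁ / X.M₂) (Q := c * C * (B * X.M₂)) X.hM₁.le
      (div_nonneg (mul_nonneg hcy X.hM₁.le) X.hM₂.le)
      (X.y'_comp_bounds n cy ihy hx)
      (X.pdy_comp_bounds hC n c hc ihH hB hH hFB hx)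
    calc ‖iteratedDerivWithin n f₂ X.Ω x‖
        ≤ 2 ^ n * ((cy * X.M₁ / X.M₂) * (c * C * (B * X.M₂)) * X.M₁ ^ n) := hb
      _ = 2 ^ n * cy * c * C * B * X.M₁ ^ (n+1) := by
          field_simp [X.hM₂.ne']
          ring
  calc ‖iteratedDerivWithin n f₁ X.Ω x + iteratedDerivWithin n f₂ X.Ω x‖
      ≤ ‖iteratedDerivWithin n f₁ X.Ω x‖ + ‖iteratedDerivWithin n f₂ X.Ω x‖ := norm_add_le _ _
    _ ≤ c * C * B * X.M₁ ^ (n+1) + 2 ^ n * cy * c * C * B * X.M₁ ^ (n+1) := by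
        exact add_le_add h1 h2
    _ = (c * C + 2 ^ n * cy * c * C) * B * X.M₁ ^ (n+1) := by ring

end Ctx

namespace Ctx

variable {C : ℝ} (X : Ctx C)

lemma step_psi (hC : 1 ≤ C) (n : ℕ) (c cH : ℝ) (hc : 1 ≤ c) (hcH : 1 ≤ cH)
    (ihψ : ∀ k, k ≤ n → ∀ x ∈ X.Ω,
      ‖iteratedDerivWithin k X.ψ X.Ω x‖ ≤ c * X.M₁ ^ k / (X.A * X.M₂))
    (ihH' : ∀ k, 1 ≤ k → k ≤ n + 1 → ∀ B : ℝ, 0 ≤ B → ∀ H : ℝ × ℝ → ℂ,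
      ContDiffOn ℝ (⊤:ℕ∞) H X.U → X.FB' B H →
      ∀ x ∈ X.Ω, ‖iteratedDerivWithin k (fun t => H (X.u t)) X.Ω x‖ ≤ cH * B * X.M₁ ^ k) :
    ∀ x ∈ X.Ω, ‖iteratedDerivWithin (n+1) X.ψ X.Ω x‖ ≤
      (4 ^ n * cH * c ^ 2) * X.M₁ ^ (n+1) / (X.A * X.M₂) := by
  intro x hx
  set g : ℝ → ℂ := fun t => pd (0,1) X.G (X.u t) with hgdef
  have hgs : ContDiffOn ℝ (⊤:ℕ∞) g X.Ω := X.g_smooth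
  have hg's : ContDiffOn ℝ (⊤:ℕ∞) (derivWithin g X.Ω) X.Ω :=
    hgs.derivWithin (m := (⊤:ℕ∞)) X.hUDO (by simp)
  have hGyU : ContDiffOn ℝ (⊤:ℕ∞) (pd (0,1) X.G) X.U := pd_contDiffOn X.hUo X.hG (0,1)
  have hPBy : X.PB (X.A * X.M₂) (pd (0,1) X.G) := X.PB_pd_y X.hG X.FB'_G
  have hAM : 0 < X.A * X.M₂ := mul_pos X.hA X.hM₂
  -- bounds on ‖D^j (derivWithin g Ω) x‖ for j ≤ n
  have hg'b : ∀ j, j ≤ n → ‖iteratedDerivWithin j (derivWithin g X.Ω) X.Ω x‖ ≤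
      (cH * (X.A * X.M₂) * X.M₁) * X.M₁ ^ j := by
    intro j hj
    rw [← iteratedDerivWithin_succ']
    calc ‖iteratedDerivWithin (j+1) g X.Ω x‖ ≤ cH * (X.A * X.M₂) * X.M₁ ^ (j+1) :=
        ihH' (j+1) (by omega) (by omega) (X.A * X.M₂) hAM.le (pd (0,1) X.G) hGyU
          (Ctx.PB.toFB' X hGyU hPBy) x hx
      _ = (cH * (X.A * X.M₂) * X.M₁) * X.M₁ ^ j := by rw [pow_succ]; ring
  -- bounds on the inner product f₁ = (-g') * ψ
  set f₁ : ℝ → ℂ := fun t => -(derivWithin g X.Ω t) * X.ψ t with hf₁def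
  have hf₁s : ContDiffOn ℝ (⊤:ℕ∞) f₁ X.Ω := hg's.neg.mul X.psi_smooth
  have hf₁b : ∀ i, i ≤ n → ‖iteratedDerivWithin i f₁ X.Ω x‖ ≤
      (2 ^ n * cH * c * X.M₁) * X.M₁ ^ i := by
    intro i hi
    have hb := prod_bound X.hUDO hg's.neg X.psi_smooth hx i (M := X.M₁)
      (P := cH * (X.A * X.M₂) * X.M₁) (Q := c / (X.A * X.M₂)) X.hM₁.le
      (mul_nonneg (mul_nonneg (by linarith) hAM.le) X.hM₁.le)
      (fun j hj => by
        rw [show (fun t => -(derivWithin g X.Ω t)) =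
            (fun t => -((derivWithin g X.Ω) t)) from rfl,
          iteratedDerivWithin_fun_neg _, norm_neg]
        exact hg'b j (le_trans hj hi))
      (fun j hj => by
        calc ‖iteratedDerivWithin j X.ψ X.Ω x‖ ≤ c * X.M₁ ^ j / (X.A * X.M₂) :=
            ihψ j (le_trans hj hi) x hx
          _ = c / (X.A * X.M₂) * X.M₁ ^ j := by ring)
    calc ‖iteratedDerivWithin i f₁ X.Ω x‖
        ≤ 2 ^ i * ((cH * (X.A * X.M₂) * X.M₁) * (c / (X.A * X.M₂)) * X.M₁ ^ i) := hb
      _ = 2 ^ i * (cH * c * X.M₁) * X.M₁ ^ i := by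
          field_simp [X.hA.ne', X.hM₂.ne']
      _ ≤ 2 ^ n * (cH * c * X.M₁) * X.M₁ ^ i := by
          refine mul_le_mul_of_nonneg_right (mul_le_mul_of_nonneg_right ?_ ?_) ?_
          · exact pow_le_pow_right₀ (by norm_num) hi
          · exact mul_nonneg (mul_nonneg (by linarith) (by linarith)) X.hM₁.le
          · exact (pow_pos X.hM₁ i).le
      _ = (2 ^ n * cH * c * X.M₁) * X.M₁ ^ i := by ring
  -- now the outer step
  rw [iteratedDerivWithin_succ']
  have heq : Set.EqOn (derivWithin X.ψ X.Ω) (fun t => f₁ t * X.ψ t) X.Ω := by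
    intro t ht
    exact X.psi_deriv ht
  rw [iteratedDerivWithin_congr heq hx]
  have hb := prod_bound X.hUDO hf₁s X.psi_smooth hx n (M := X.M₁)
    (P := 2 ^ n * cH * c * X.M₁) (Q := c / (X.A * X.M₂)) X.hM₁.le
    (by
      have : (0:ℝ) < 2 ^ n := by positivity
      exact mul_nonneg (mul_nonneg (mul_nonneg this.le (by linarith)) (by linarith)) X.hM₁.le)
    hf₁b
    (fun j hj => by
      calc ‖iteratedDerivWithin j X.ψ X.Ω x‖ ≤ c * X.M₁ ^ j / (X.A * X.M₂) :=
          ihψ j hj x hx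
        _ = c / (X.A * X.M₂) * X.M₁ ^ j := by ring)
  calc ‖iteratedDerivWithin n (fun t => f₁ t * X.ψ t) X.Ω x‖
      ≤ 2 ^ n * ((2 ^ n * cH * c * X.M₁) * (c / (X.A * X.M₂)) * X.M₁ ^ n) := hb
    _ = (4 ^ n * cH * c ^ 2) * X.M₁ ^ (n+1) / (X.A * X.M₂) := by
        rw [show (4:ℝ) ^ n = 2 ^ n * 2 ^ n by rw [← mul_pow]; norm_num]
        field_simp [X.hA.ne', X.hM₂.ne']
        ring

end Ctx

lemma master (C : ℝ) (hC : 1 ≤ C) (n : ℕ) :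
    ∃ c : ℝ, 1 ≤ c ∧ ∀ (X : Ctx C),
      (∀ k, 1 ≤ k → k ≤ n → ∀ B : ℝ, 0 ≤ B → ∀ H : ℝ × ℝ → ℂ,
        ContDiffOn ℝ (⊤:ℕ∞) H X.U → X.FB' B H →
        ∀ x ∈ X.Ω, ‖iteratedDerivWithin k (fun t => H (X.u t)) X.Ω x‖ ≤ c * B * X.M₁ ^ k)
      ∧ (∀ k, k ≤ n → ∀ x ∈ X.Ω,
          ‖iteratedDerivWithin k X.ψ X.Ω x‖ ≤ c * X.M₁ ^ k / (X.A * X.M₂))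
      ∧ (∀ k, 1 ≤ k → k ≤ n → ∀ x ∈ X.Ω,
          |iteratedDerivWithin k X.y X.Ω x| ≤ c * X.M₁ ^ k / X.M₂) := by
  induction n with
  | zero =>
    refine ⟨C, hC, fun X => ⟨fun k hk1 hk0 => by omega, ?_, fun k hk1 hk0 => by omega⟩⟩
    intro k hk x hx
    interval_cases k
    rw [iteratedDerivWithin_zero]
    have hAM : 0 < X.A * X.M₂ := mul_pos X.hA X.hM₂
    have hlow := X.Gy_lower hx
    have hpos : 0 < ‖pd (0,1) X.G (X.u x)‖ := lt_of_lt_of_le hAM hlow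
    calc ‖X.ψ x‖ = ‖pd (0,1) X.G (X.u x)‖⁻¹ := by rw [Ctx.ψ, norm_inv]
      _ ≤ (X.A * X.M₂)⁻¹ := by
          exact inv_anti₀ hAM hlow
      _ = 1 / (X.A * X.M₂) := by rw [one_div]
      _ ≤ C / (X.A * X.M₂) := by exact div_le_div_of_nonneg_right hC hAM.le |>.trans_eq rfl
      _ = C * X.M₁ ^ 0 / (X.A * X.M₂) := by rw [pow_zero, mul_one]
  | succ n ih =>
    obtain ⟨c, hc, ihX⟩ := ih
    have h2n : (1:ℝ) ≤ 2 ^ n := one_le_pow₀ (by norm_num)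
    have h4n : (1:ℝ) ≤ 4 ^ n := one_le_pow₀ (by norm_num)
    set c₁ : ℝ := 2 ^ n * c ^ 2 * C with hc₁def
    set c₂ : ℝ := c * C + 2 ^ n * c₁ * c * C with hc₂def
    set c₃ : ℝ := 4 ^ n * c₂ * c ^ 2 with hc₃def
    have hcC : (1:ℝ) ≤ c * C := by nlinarith
    have hcc₁ : c ≤ c₁ := by
      have h1 : c * 1 ≤ c * (c * C) := mul_le_mul_of_nonneg_left hcC (by linarith)
      have h2 : (c * (c * C)) * 1 ≤ (c * (c * C)) * 2 ^ n :=
        mul_le_mul_of_nonneg_left h2n (by nlinarith)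
      calc c = c * 1 := by ring
        _ ≤ c * (c * C) := h1
        _ = (c * (c * C)) * 1 := by ring
        _ ≤ (c * (c * C)) * 2 ^ n := h2
        _ = c₁ := by rw [hc₁def]; ring
    have hc₁ : 1 ≤ c₁ := le_trans hc hcc₁
    have h2ncC : (1:ℝ) ≤ 2 ^ n * (c * C) := by nlinarith
    have hc₁c₂ : c₁ ≤ c₂ := by
      have h1 : c₁ * 1 ≤ c₁ * (2 ^ n * (c * C)) :=
        mul_le_mul_of_nonneg_left h2ncC (by linarith)
      have h2 : (0:ℝ) ≤ c * C := by linarith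
      nlinarith [h1]
    have hcc₂ : c ≤ c₂ := le_trans hcc₁ hc₁c₂
    have hc₂ : 1 ≤ c₂ := le_trans hc₁ hc₁c₂
    have hc₂c₃ : c₂ ≤ c₃ := by
      have hc2 : (1:ℝ) ≤ c ^ 2 := by nlinarith
      have h4c : (1:ℝ) ≤ 4 ^ n * c ^ 2 := by nlinarith
      have h1 : c₂ * 1 ≤ c₂ * (4 ^ n * c ^ 2) :=
        mul_le_mul_of_nonneg_left h4c (by linarith)
      calc c₂ = c₂ * 1 := by ring
        _ ≤ c₂ * (4 ^ n * c ^ 2) := h1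
        _ = c₃ := by rw [hc₃def]; ring
    have hc₃ : 1 ≤ c₃ := le_trans hc₂ hc₂c₃
    have hcc₃ : c ≤ c₃ := le_trans hcc₂ hc₂c₃
    refine ⟨c₃, hc₃, fun X => ?_⟩
    obtain ⟨ihH, ihψ, ihy⟩ := ihX X
    have hAM : 0 < X.A * X.M₂ := mul_pos X.hA X.hM₂
    -- y at level n+1
    have newy : ∀ x ∈ X.Ω, |iteratedDerivWithin (n+1) X.y X.Ω x| ≤ c₁ * X.M₁ ^ (n+1) / X.M₂ :=
      X.step_y hC n c hc (fun k hk1 hkn => ihH k hk1 hkn) (fun k hkn => ihψ k hkn)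
    -- combined y bounds up to n+1 with constant c₁
    have ihy' : ∀ k, 1 ≤ k → k ≤ n + 1 → ∀ x ∈ X.Ω,
        |iteratedDerivWithin k X.y X.Ω x| ≤ c₁ * X.M₁ ^ k / X.M₂ := by
      intro k hk1 hk x hx
      rcases Nat.lt_or_ge k (n+1) with hlt | hge
      · calc |iteratedDerivWithin k X.y X.Ω x| ≤ c * X.M₁ ^ k / X.M₂ :=
            ihy k hk1 (by omega) x hx
          _ ≤ c₁ * X.M₁ ^ k / X.M₂ := by
              apply div_le_div_of_nonneg_right ?_ X.hM₂.le |>.trans_eq rfl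
              exact mul_le_mul_of_nonneg_right hcc₁ (pow_pos X.hM₁ k).le
      · have : k = n + 1 := by omega
        subst this
        exact newy x hx
    -- H at level n+1
    have newH := X.step_H hC n c c₁ hc (by linarith) ihH ihy'
    -- combined H bounds up to n+1 with constant c₂
    have ihH' : ∀ k, 1 ≤ k → k ≤ n + 1 → ∀ B : ℝ, 0 ≤ B → ∀ H : ℝ × ℝ → ℂ,
        ContDiffOn ℝ (⊤:ℕ∞) H X.U → X.FB' B H →
        ∀ x ∈ X.Ω, ‖iteratedDerivWithin k (fun t => H (X.u t)) X.Ω x‖ ≤ c₂ * B * X.M₁ ^ k := by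
      intro k hk1 hk B hB H hHs hFB x hx
      rcases Nat.lt_or_ge k (n+1) with hlt | hge
      · calc ‖iteratedDerivWithin k (fun t => H (X.u t)) X.Ω x‖ ≤ c * B * X.M₁ ^ k :=
            ihH k hk1 (by omega) B hB H hHs hFB x hx
          _ ≤ c₂ * B * X.M₁ ^ k := by
              exact mul_le_mul_of_nonneg_right
                (mul_le_mul_of_nonneg_right hcc₂ hB) (pow_pos X.hM₁ k).le
      · have : k = n + 1 := by omega
        subst this
        exact newH B hB H hHs hFB x hx
    -- ψ at level n+1
    have newψ := X.step_psi hC n c c₂ hc hc₂ ihψ ihH'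
    refine ⟨?_, ?_, ?_⟩
    · intro k hk1 hk B hB H hHs hFB x hx
      calc ‖iteratedDerivWithin k (fun t => H (X.u t)) X.Ω x‖ ≤ c₂ * B * X.M₁ ^ k :=
          ihH' k hk1 hk B hB H hHs hFB x hx
        _ ≤ c₃ * B * X.M₁ ^ k :=
          mul_le_mul_of_nonneg_right
            (mul_le_mul_of_nonneg_right hc₂c₃ hB) (pow_pos X.hM₁ k).le
    · intro k hk x hx
      rcases Nat.lt_or_ge k (n+1) with hlt | hge
      · calc ‖iteratedDerivWithin k X.ψ X.Ω x‖ ≤ c * X.M₁ ^ k / (X.A * X.M₂) :=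
            ihψ k (by omega) x hx
          _ ≤ c₃ * X.M₁ ^ k / (X.A * X.M₂) := by
              apply div_le_div_of_nonneg_right ?_ hAM.le |>.trans_eq rfl
              exact mul_le_mul_of_nonneg_right hcc₃ (pow_pos X.hM₁ k).le
      · have : k = n + 1 := by omega
        subst this
        calc ‖iteratedDerivWithin (n+1) X.ψ X.Ω x‖
            ≤ (4 ^ n * c₂ * c ^ 2) * X.M₁ ^ (n+1) / (X.A * X.M₂) := newψ x hx
          _ = c₃ * X.M₁ ^ (n+1) / (X.A * X.M₂) := by rw [hc₃def]
    · intro k hk1 hk x hx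
      calc |iteratedDerivWithin k X.y X.Ω x| ≤ c₁ * X.M₁ ^ k / X.M₂ :=
          ihy' k hk1 hk x hx
        _ ≤ c₃ * X.M₁ ^ k / X.M₂ := by
            apply div_le_div_of_nonneg_right ?_ X.hM₂.le |>.trans_eq rfl
            exact mul_le_mul_of_nonneg_right (le_trans hc₁c₂ hc₂c₃) (pow_pos X.hM₁ k).le

theorem statement18
    (j N : ℕ) (hj : 1 ≤ j) (hN : 1 ≤ N) (C : ℝ) (hC : 1 ≤ C) :
    ∃ C' : ℝ, 0 < C' ∧ ∃ C'' : ℝ, 0 < C'' ∧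
      ∀ Ω I : Set ℝ, IsOpen Ω → Ω.OrdConnected → IsOpen I → I.OrdConnected →
      ∀ G : ℝ × ℝ → ℂ, ContDiffOn ℝ (⊤ : ℕ∞) G (Ω ×ˢ I) →
        (∀ p ∈ Ω ×ˢ I, mixedPartial 0 1 G p ≠ 0) →
      ∀ y : ℝ → ℝ, ContDiffOn ℝ (⊤ : ℕ∞) y Ω → (∀ x ∈ Ω, y x ∈ I) →
        (∀ x ∈ Ω, G (x, y x) = 0) →
      ∀ A M₁ M₂ : ℝ, 0 < A → 0 < M₁ → 0 < M₂ →
        (∀ x ∈ Ω, A * M₂ ≤ ‖mixedPartial 0 1 G (x, y x)‖) →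
        (∀ x ∈ Ω, ∀ α₁ α₂ : ℕ, (α₁, α₂) ≠ (0, 0) →
          ‖mixedPartial α₁ α₂ G (x, y x)‖ ≤ C * A * M₁ ^ α₁ * M₂ ^ α₂) →
        (∀ x ∈ Ω, |iteratedDerivWithin j y Ω x| ≤ C' * M₁ ^ j / M₂) ∧
        (∀ H : ℝ × ℝ → ℂ, ContDiffOn ℝ (⊤ : ℕ∞) H (Ω ×ˢ I) →
          ∀ B : ℝ, 0 < B →
          (∀ x ∈ Ω, ∀ α₁ α₂ : ℕ, (α₁, α₂) ≠ (0, 0) →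
            ‖mixedPartial α₁ α₂ H (x, y x)‖ ≤ C * B * M₁ ^ α₁ * M₂ ^ α₂) →
          ∀ x ∈ Ω, ‖iteratedDerivWithin N (fun x' => H (x', y x')) Ω x‖ ≤ C'' * B * M₁ ^ N) := by
  obtain ⟨c, hc1, hc⟩ := master C hC (max j N)
  refine ⟨c, by linarith, c, by linarith, ?_⟩
  intro Ω I hΩ _ hI _ G hG hGy y hy hmap hzero A M₁ M₂ hA hM₁ hM₂ hlow hupp
  set X : Ctx C := ⟨Ω, I, hΩ, hI, G, hG, y, hy, hmap, hzero, A, M₁, M₂, hA, hM₁, hM₂,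
    hlow, hupp⟩ with hXdef
  obtain ⟨hH, hψ, hy'⟩ := hc X
  constructor
  · intro x hx
    exact hy' j hj (le_max_left j N) x hx
  · intro H hHs B hB hHb x hx
    exact hH N hN (le_max_right j N) B hB.le H hHs (fun x hx => hHb x hx) x hx
end
end
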